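/- arXiv:1909.00937 — 3 statements merged into one kernel-verified Lean document; each statement's English description precedes it below -/
import Mathlib

section
/- For every countable ordinal ε with 0 < ε < ω₁ there exists a cute YZR(ε)-system: a YZR(ε)-system S with universe ω such that for every finite YZR(ε)-system q and every M < ω there is a quasi-embedding φ of q into S with range contained in [M, ω). -/
open scoped Classical

/-- A `YZR(ε)`-system (Definition 3.1): a nonempty set `X` of ordinals together with functions
`r : [X]^{<ω}\{∅} → ε+1`, `j, k : [X]^{<ω}\{∅} → ω` satisfying monotonicity of `r`,
positivity of `r` on singletons, and the witness condition `(*)₅`.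
Here `a_{k(w)}` is encoded as the element `a ∈ w` with exactly `k w` members of `w` below it,
and `|w ∩ b|` as the number of members of `w` below `b`. -/
structure YZRSystem (ε : Ordinal) where
  X : Set Ordinal
  nonempty : X.Nonempty
  r : Finset Ordinal → Ordinal
  j : Finset Ordinal → ℕ
  k : Finset Ordinal → ℕ
  r_le : ∀ w : Finset Ordinal, w.Nonempty → ↑w ⊆ X → r w ≤ ε
  mono : ∀ u w : Finset Ordinal, u.Nonempty → u ⊆ w → ↑w ⊆ X → r w ≤ r u
  r_pos : ∀ a ∈ X, 0 < r {a}
  k_lt : ∀ w : Finset Ordinal, w.Nonempty → ↑w ⊆ X → k w < w.card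
  witness : ∀ w : Finset Ordinal, w.Nonempty → ↑w ⊆ X →
    ∀ a ∈ w, (w.filter (fun x => x < a)).card = k w →
    ∀ b ∈ X, b ∉ w →
    ¬ ((w.filter (fun x => x < b)).card = k w ∧
       j (insert b (w.erase a)) = j w ∧ r (insert b w) = r w)

/-- A quasi-embedding of a `YZR(ε)`-system `q` into `S` (Definition 3.3): an increasing
injection `φ : X^q → X^S` preserving `r` and `k` on all nonempty finite subsets,
and preserving `j` on those of positive `r`-value. -/
def QuasiEmb {ε : Ordinal} (q S : YZRSystem ε) (φ : Ordinal → Ordinal) : Prop :=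
  StrictMonoOn φ q.X ∧ Set.MapsTo φ q.X S.X ∧
  ∀ v : Finset Ordinal, v.Nonempty → ↑v ⊆ q.X →
    S.r (v.image φ) = q.r v ∧ S.k (v.image φ) = q.k v ∧
    (0 < q.r v → S.j (v.image φ) = q.j v)


section Transfer
variable {α β : Type*} [LinearOrder α] [LinearOrder β] {f : α → β} {D : Set α}

lemma tf_mem (hf : StrictMonoOn f D) {w : Finset α} (hw : ∀ x ∈ w, x ∈ D) {b : α} (hb : b ∈ D) :
    f b ∈ w.image f ↔ b ∈ w := by
  simp only [Finset.mem_image]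
  constructor
  · rintro ⟨x, hx, hfx⟩
    rwa [hf.injOn (hw x hx) hb hfx] at hx
  · exact fun h => ⟨b, h, rfl⟩

lemma tf_card (hf : StrictMonoOn f D) {w : Finset α} (hw : ∀ x ∈ w, x ∈ D) :
    (w.image f).card = w.card :=
  Finset.card_image_of_injOn (fun x hx y hy => hf.injOn (hw x hx) (hw y hy))

lemma tf_filter (hf : StrictMonoOn f D) {w : Finset α} (hw : ∀ x ∈ w, x ∈ D) {a : α}
    (ha : a ∈ D) : (w.image f).filter (fun y => y < f a) = (w.filter (fun x => x < a)).image f := by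
  ext y
  simp only [Finset.mem_filter, Finset.mem_image]
  constructor
  · rintro ⟨⟨x, hx, rfl⟩, hlt⟩
    exact ⟨x, ⟨hx, (hf.lt_iff_lt (hw x hx) ha).1 hlt⟩, rfl⟩
  · rintro ⟨x, ⟨hx, hlt⟩, rfl⟩
    exact ⟨⟨x, hx, rfl⟩, hf (hw x hx) ha hlt⟩

lemma tf_filter_card (hf : StrictMonoOn f D) {w : Finset α} (hw : ∀ x ∈ w, x ∈ D) {a : α}
    (ha : a ∈ D) :
    ((w.image f).filter (fun y => y < f a)).card = (w.filter (fun x => x < a)).card := by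
  rw [tf_filter hf hw ha]
  exact tf_card hf (fun x hx => hw x (Finset.mem_of_mem_filter x hx))

lemma tf_erase (hf : StrictMonoOn f D) {w : Finset α} (hw : ∀ x ∈ w, x ∈ D) {a : α}
    (ha : a ∈ D) : (w.erase a).image f = (w.image f).erase (f a) := by
  ext y
  simp only [Finset.mem_image, Finset.mem_erase]
  constructor
  · rintro ⟨x, ⟨hxa, hx⟩, rfl⟩
    exact ⟨fun h => hxa (hf.injOn (hw x hx) ha h), x, hx, rfl⟩
  · rintro ⟨hne, x, hx, rfl⟩
    exact ⟨x, ⟨fun h => hne (by rw [h]), hx⟩, rfl⟩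

end Transfer

universe u v w

/-- Countable code for a finite YZR(ε)-system of size `n+1`. -/
def CodeData (ε : Ordinal.{u}) : Type (u+1) := Σ n : ℕ, Finset (Fin (n + 1)) → ↥(Set.Iic ε) × ℕ × ℕ

lemma countable_Iic_of_lt_aleph1 {ε : Ordinal.{u}} (h1 : ε < (Cardinal.aleph 1).ord) :
    Countable ↥(Set.Iic ε) := by
  have h2 : Order.succ ε < (Cardinal.aleph 1).ord := by
    have := Cardinal.isSuccLimit_ord (le_of_lt Cardinal.aleph0_lt_aleph_one)
    exact this.succ_lt h1
  have h3 : (Order.succ ε).card < Cardinal.aleph 1 := Cardinal.lt_ord.1 h2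
  have h4 : (Order.succ ε).card ≤ Cardinal.aleph0 := by
    rwa [← Cardinal.succ_aleph0, Order.lt_succ_iff] at h3
  have h5 : Set.Iic ε = Set.Iio (Order.succ ε) := by
    ext x; simp [Order.lt_succ_iff]
  rw [← Cardinal.mk_le_aleph0_iff]
  rw [h5, Ordinal.mk_Iio_ordinal]
  calc Cardinal.lift.{u+1} (Order.succ ε).card ≤ Cardinal.lift.{u+1} Cardinal.aleph0 :=
        Cardinal.lift_le.2 h4
    _ = Cardinal.aleph0 := by simp

lemma countable_CodeData {ε : Ordinal.{u}} (h1 : ε < (Cardinal.aleph 1).ord) :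
    Countable (CodeData ε) := by
  have := countable_Iic_of_lt_aleph1 h1
  unfold CodeData
  infer_instance
variable {ε : Ordinal.{u}}

/-- Size of the system coded by `c`. -/
def sz (c : CodeData ε) : ℕ := c.1 + 1

noncomputable def cR (c : CodeData ε) (u : Finset ℕ) : Ordinal.{u} :=
  if h : ∀ m ∈ u, m < sz c then ((c.2 (u.attachFin h)).1 : Ordinal) else 0

noncomputable def cJ (c : CodeData ε) (u : Finset ℕ) : ℕ :=
  if h : ∀ m ∈ u, m < sz c then (c.2 (u.attachFin h)).2.1 else 0

noncomputable def cK (c : CodeData ε) (u : Finset ℕ) : ℕ :=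
  if h : ∀ m ∈ u, m < sz c then (c.2 (u.attachFin h)).2.2 else 0

/-- Validity of a code: the axioms of a YZR(ε)-system on `{0, …, sz c - 1}`. -/
structure ValidC (ε : Ordinal.{u}) (c : CodeData ε) : Prop where
  r_le : ∀ u : Finset ℕ, u.Nonempty → (∀ m ∈ u, m < sz c) → cR c u ≤ ε
  mono : ∀ u w : Finset ℕ, u.Nonempty → u ⊆ w → (∀ m ∈ w, m < sz c) → cR c w ≤ cR c u
  r_pos : ∀ m < sz c, 0 < cR c {m}
  k_lt : ∀ u : Finset ℕ, u.Nonempty → (∀ m ∈ u, m < sz c) → cK c u < u.card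
  witness : ∀ u : Finset ℕ, u.Nonempty → (∀ m ∈ u, m < sz c) →
    ∀ a ∈ u, (u.filter (fun x => x < a)).card = cK c u →
    ∀ b < sz c, b ∉ u →
    ¬ ((u.filter (fun x => x < b)).card = cK c u ∧
       cJ c (insert b (u.erase a)) = cJ c u ∧ cR c (insert b u) = cR c u)

section Blocks
variable (g : ℕ → CodeData ε)

/-- Start of the `t`-th block. -/
def st : ℕ → ℕ
  | 0 => 0
  | t + 1 => st t + sz (g t)

lemma st_succ (t : ℕ) : st g (t + 1) = st g t + sz (g t) := rfl

lemma st_strictMono : StrictMono (st g) :=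
  strictMono_nat_of_lt_succ fun t => by
    rw [st_succ]; exact Nat.lt_add_of_pos_right (Nat.succ_pos _)

lemma le_st (t : ℕ) : t ≤ st g t := (st_strictMono g).le_apply

/-- The block containing `m`. -/
noncomputable def blk (m : ℕ) : ℕ := Nat.findGreatest (fun t => st g t ≤ m) m

lemma st_blk_le (m : ℕ) : st g (blk g m) ≤ m := by
  have h0 : st g 0 ≤ m := by simp [st]
  unfold blk
  exact Nat.findGreatest_spec (P := fun t => st g t ≤ m) (Nat.zero_le m) h0

lemma lt_st_blk_succ (m : ℕ) : m < st g (blk g m + 1) := by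
  by_contra h
  push_neg at h
  exact Nat.findGreatest_is_greatest (Nat.lt_succ_self _)
    (le_trans (le_st g _) h) h

/-- The `t`-th block. -/
def Bt (t : ℕ) : Finset ℕ := Finset.Ico (st g t) (st g (t + 1))

lemma mem_Bt {m t : ℕ} : m ∈ Bt g t ↔ st g t ≤ m ∧ m < st g (t + 1) := Finset.mem_Ico

lemma mem_Bt_blk (m : ℕ) : m ∈ Bt g (blk g m) :=
  (mem_Bt g).2 ⟨st_blk_le g m, lt_st_blk_succ g m⟩

lemma blk_eq_of_mem {m t : ℕ} (h : m ∈ Bt g t) : blk g m = t := by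
  rw [mem_Bt] at h
  have h2 := (mem_Bt g).1 (mem_Bt_blk g m)
  rcases lt_trichotomy (blk g m) t with hlt | heq | hgt
  · exact absurd (lt_of_le_of_lt h.1 h2.2) (not_lt.2 ((st_strictMono g).monotone hlt))
  · exact heq
  · exact absurd (lt_of_le_of_lt h2.1 h.2) (not_lt.2 ((st_strictMono g).monotone hgt))

/-- Shift a subset of block `t` down to `{0, …, sz - 1}`. -/
def shz (t : ℕ) (u : Finset ℕ) : Finset ℕ := u.image (fun m => m - st g t)

lemma sub_strictMonoOn (t : ℕ) : StrictMonoOn (fun m => m - st g t) {m | st g t ≤ m} := by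
  intro a ha b hb hab
  simp only [Set.mem_setOf_eq] at ha hb
  show a - st g t < b - st g t
  omega

lemma shz_bdd {t : ℕ} {u : Finset ℕ} (hu : ∀ m ∈ u, m ∈ Bt g t) :
    ∀ m ∈ shz g t u, m < sz (g t) := by
  intro m hm
  simp only [shz, Finset.mem_image] at hm
  obtain ⟨x, hx, rfl⟩ := hm
  have := (mem_Bt g).1 (hu x hx)
  rw [st_succ] at this
  omega

noncomputable def rb (t : ℕ) (u : Finset ℕ) : Ordinal.{u} := cR (g t) (shz g t u)
noncomputable def jb (t : ℕ) (u : Finset ℕ) : ℕ := cJ (g t) (shz g t u)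
noncomputable def kb (t : ℕ) (u : Finset ℕ) : ℕ := cK (g t) (shz g t u)

noncomputable def tOf (w : Finset ℕ) : ℕ :=
  if h : w.Nonempty then blk g (w.min' h) else 0

def isLocal (w : Finset ℕ) : Prop := ∀ m ∈ w, m ∈ Bt g (tOf g w)

lemma local_of_subset {w : Finset ℕ} (hne : w.Nonempty) {t : ℕ}
    (ht : ∀ m ∈ w, m ∈ Bt g t) : tOf g w = t ∧ isLocal g w := by
  have h1 : tOf g w = t := by
    rw [tOf, dif_pos hne]
    exact blk_eq_of_mem g (ht _ (w.min'_mem hne))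
  exact ⟨h1, by rw [isLocal, h1]; exact ht⟩

lemma singleton_local (m : ℕ) : tOf g {m} = blk g m ∧ isLocal g {m} :=
  local_of_subset g ⟨m, Finset.mem_singleton_self m⟩
    (fun x hx => by rw [Finset.mem_singleton] at hx; subst hx; exact mem_Bt_blk g x)

noncomputable def jmax (t : ℕ) : ℕ := (Bt g t).powerset.sup (fun u => jb g t u)

noncomputable def Jw (w : Finset ℕ) : ℕ := (w.image (blk g)).sup (jmax g)

lemma jb_le_jmax {t : ℕ} {w : Finset ℕ} (hw : ∀ m ∈ w, m ∈ Bt g t) :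
    jb g t w ≤ jmax g t :=
  Finset.le_sup (Finset.mem_powerset.2 (fun m hm => hw m hm))

lemma jmax_le_Jw {t : ℕ} {w : Finset ℕ} {m : ℕ} (hm : m ∈ w) (hb : m ∈ Bt g t) :
    jmax g t ≤ Jw g w := by
  apply Finset.le_sup
  rw [Finset.mem_image]
  exact ⟨m, hm, blk_eq_of_mem g hb⟩

noncomputable def rS (w : Finset ℕ) : Ordinal.{u} :=
  if isLocal g w then rb g (tOf g w) w else 0

noncomputable def kS (w : Finset ℕ) : ℕ :=
  if isLocal g w then kb g (tOf g w) w else 0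

noncomputable def jS (w : Finset ℕ) : ℕ :=
  if isLocal g w then jb g (tOf g w) w
  else Nat.pair (Jw g w) (Encodable.encode w) + 1

variable (hg : ∀ t, ValidC ε (g t))

lemma mem_D_of_local {w : Finset ℕ} (hL : isLocal g w) :
    ∀ m ∈ w, m ∈ {m : ℕ | st g (tOf g w) ≤ m} :=
  fun m hm => ((mem_Bt g).1 (hL m hm)).1

include hg

lemma rS_le {w : Finset ℕ} (hne : w.Nonempty) : rS g w ≤ ε := by
  rw [rS]
  split_ifs with hL
  · exact (hg _).r_le _ (hne.image _) (shz_bdd g hL)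
  · exact zero_le

lemma rS_mono {u w : Finset ℕ} (hne : u.Nonempty) (hsub : u ⊆ w) : rS g w ≤ rS g u := by
  by_cases hL : isLocal g w
  · have hu : ∀ m ∈ u, m ∈ Bt g (tOf g w) := fun m hm => hL m (hsub hm)
    obtain ⟨ht, hLu⟩ := local_of_subset g hne hu
    rw [rS, if_pos hL, rS, if_pos hLu, ht]
    exact (hg _).mono _ _ (hne.image _) (Finset.image_subset_image hsub) (shz_bdd g hL)
  · rw [rS, if_neg hL]
    exact zero_le

lemma rS_pos (m : ℕ) : 0 < rS g {m} := by
  obtain ⟨ht, hL⟩ := singleton_local g m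
  rw [rS, if_pos hL, ht, rb]
  have : shz g (blk g m) {m} = {m - st g (blk g m)} := Finset.image_singleton _ _
  rw [this]
  apply (hg _).r_pos
  have := (mem_Bt g).1 (mem_Bt_blk g m)
  rw [st_succ] at this
  omega

lemma kS_lt {w : Finset ℕ} (hne : w.Nonempty) : kS g w < w.card := by
  rw [kS]
  split_ifs with hL
  · have := (hg _).k_lt _ (hne.image _) (shz_bdd g hL)
    rwa [tf_card (sub_strictMonoOn g _) (mem_D_of_local g hL)] at this
  · exact hne.card_pos

omit hg in
lemma rS_local {w : Finset ℕ} (hL : isLocal g w) : rS g w = rb g (tOf g w) w := by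
  rw [rS, if_pos hL]

omit hg in
lemma rS_cross {w : Finset ℕ} (hL : ¬ isLocal g w) : rS g w = 0 := by
  rw [rS, if_neg hL]

omit hg in
lemma kS_local {w : Finset ℕ} (hL : isLocal g w) : kS g w = kb g (tOf g w) w := by
  rw [kS, if_pos hL]

omit hg in
lemma jS_local {w : Finset ℕ} (hL : isLocal g w) : jS g w = jb g (tOf g w) w := by
  rw [jS, if_pos hL]

omit hg in
lemma jS_cross {w : Finset ℕ} (hL : ¬ isLocal g w) :
    jS g w = Nat.pair (Jw g w) (Encodable.encode w) + 1 := by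
  rw [jS, if_neg hL]

omit hg in
lemma shz_insert (t b : ℕ) (u : Finset ℕ) :
    shz g t (insert b u) = insert (b - st g t) (shz g t u) :=
  Finset.image_insert _ _ _

omit hg in
lemma mem_D_of_Bt {t : ℕ} {u : Finset ℕ} (hu : ∀ m ∈ u, m ∈ Bt g t) :
    ∀ m ∈ u, m ∈ {m : ℕ | st g t ≤ m} :=
  fun m hm => ((mem_Bt g).1 (hu m hm)).1

omit hg in
lemma shz_erase {t a : ℕ} {u : Finset ℕ} (hu : ∀ m ∈ u, m ∈ Bt g t) (ha : st g t ≤ a) :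
    shz g t (u.erase a) = (shz g t u).erase (a - st g t) :=
  tf_erase (sub_strictMonoOn g t) (mem_D_of_Bt g hu) ha

omit hg in
lemma shz_filter_card {t a : ℕ} {u : Finset ℕ} (hu : ∀ m ∈ u, m ∈ Bt g t)
    (ha : st g t ≤ a) :
    ((shz g t u).filter (fun x => x < a - st g t)).card = (u.filter (fun x => x < a)).card :=
  tf_filter_card (sub_strictMonoOn g t) (mem_D_of_Bt g hu) ha

omit hg in
lemma shz_mem {t b : ℕ} {u : Finset ℕ} (hu : ∀ m ∈ u, m ∈ Bt g t) (hb : st g t ≤ b) :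
    b - st g t ∈ shz g t u ↔ b ∈ u :=
  tf_mem (sub_strictMonoOn g t) (mem_D_of_Bt g hu) hb

omit hg in
lemma eq_singleton_of_erase_empty {w : Finset ℕ} {a : ℕ} (ha : a ∈ w)
    (he : w.erase a = ∅) : w = {a} :=
  Finset.eq_singleton_iff_unique_mem.2
    ⟨ha, fun x hx => by
      by_contra hxa
      exact Finset.notMem_empty x (he ▸ Finset.mem_erase.2 ⟨hxa, hx⟩)⟩

lemma witS {w : Finset ℕ} (hne : w.Nonempty) {a : ℕ} (ha : a ∈ w)
    (hpa : (w.filter (fun x => x < a)).card = kS g w) {b : ℕ} (hb : b ∉ w) :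
    ¬ ((w.filter (fun x => x < b)).card = kS g w ∧
       jS g (insert b (w.erase a)) = jS g w ∧ rS g (insert b w) = rS g w) := by
  rintro ⟨hposb, hj, hr⟩
  by_cases hL : isLocal g w
  · have hDw : ∀ m ∈ w, m ∈ Bt g (tOf g w) := hL
    have hsta : st g (tOf g w) ≤ a := ((mem_Bt g).1 (hL a ha)).1
    by_cases hbB : b ∈ Bt g (tOf g w)
    · have hstb : st g (tOf g w) ≤ b := ((mem_Bt g).1 hbB).1
      have hwp : ∀ m ∈ insert b w, m ∈ Bt g (tOf g w) := by
        intro m hm; rcases Finset.mem_insert.1 hm with rfl | hm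
        exacts [hbB, hL m hm]
      obtain ⟨htp, hLp⟩ := local_of_subset g ⟨b, Finset.mem_insert_self b w⟩ hwp
      have hw' : ∀ m ∈ insert b (w.erase a), m ∈ Bt g (tOf g w) := by
        intro m hm; rcases Finset.mem_insert.1 hm with rfl | hm
        exacts [hbB, hL m (Finset.mem_of_mem_erase hm)]
      obtain ⟨ht', hL'⟩ := local_of_subset g ⟨b, Finset.mem_insert_self _ _⟩ hw'
      rw [rS_local g hLp, htp, rS_local g hL] at hr
      rw [jS_local g hL', ht', jS_local g hL] at hj
      rw [kS_local g hL] at hpa hposb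
      refine (hg (tOf g w)).witness (shz g (tOf g w) w) (hne.image _) (shz_bdd g hDw)
        (a - st g (tOf g w)) ((shz_mem g hDw hsta).2 ha) ?_ (b - st g (tOf g w)) ?_
        (fun hc => hb ((shz_mem g hDw hstb).1 hc)) ⟨?_, ?_, ?_⟩
      · rw [shz_filter_card g hDw hsta]; exact hpa
      · have := ((mem_Bt g).1 hbB).2
        rw [st_succ] at this
        omega
      · rw [shz_filter_card g hDw hstb]; exact hposb
      · have e1 : insert (b - st g (tOf g w)) ((shz g (tOf g w) w).erase (a - st g (tOf g w)))
            = shz g (tOf g w) (insert b (w.erase a)) := by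
          rw [shz_insert, shz_erase g hDw hsta]
        rw [e1]; exact hj
      · have e2 : insert (b - st g (tOf g w)) (shz g (tOf g w) w)
            = shz g (tOf g w) (insert b w) := by rw [shz_insert]
        rw [e2]; exact hr
    · by_cases hr0 : rS g w = 0
      · have hane : (w.erase a).Nonempty := by
          rcases Finset.eq_empty_or_nonempty (w.erase a) with he | hne'
          · exfalso
            rw [eq_singleton_of_erase_empty ha he] at hr0
            exact absurd hr0 (ne_of_gt (rS_pos g hg a))
          · exact hne'
        obtain ⟨γ, hγ⟩ := hane
        have hγw : γ ∈ w := Finset.mem_of_mem_erase hγ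
        have hγ' : γ ∈ insert b (w.erase a) := Finset.mem_insert_of_mem hγ
        have hcross : ¬ isLocal g (insert b (w.erase a)) := by
          intro hL'
          have h1 : γ ∈ Bt g (tOf g (insert b (w.erase a))) := hL' γ hγ'
          have h2 : tOf g (insert b (w.erase a)) = tOf g w := by
            rw [← blk_eq_of_mem g h1, blk_eq_of_mem g (hL γ hγw)]
          exact hbB (h2 ▸ hL' b (Finset.mem_insert_self _ _))
        rw [jS_cross g hcross, jS_local g hL] at hj
        have h1 : jb g (tOf g w) w ≤ jmax g (tOf g w) := jb_le_jmax g hL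
        have h2 : jmax g (tOf g w) ≤ Jw g (insert b (w.erase a)) :=
          jmax_le_Jw g hγ' (hL γ hγw)
        have h3 := Nat.left_le_pair (Jw g (insert b (w.erase a)))
          (Encodable.encode (insert b (w.erase a)))
        omega
      · have hcross : ¬ isLocal g (insert b w) := by
          intro hLp
          obtain ⟨γ, hγw⟩ := hne
          have h1 : γ ∈ Bt g (tOf g (insert b w)) := hLp γ (Finset.mem_insert_of_mem hγw)
          have h2 : tOf g (insert b w) = tOf g w := by
            rw [← blk_eq_of_mem g h1, blk_eq_of_mem g (hL γ hγw)]
          exact hbB (h2 ▸ hLp b (Finset.mem_insert_self _ _))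
        rw [rS_cross g hcross] at hr
        exact hr0 hr.symm
  · have hane : (w.erase a).Nonempty := by
      rcases Finset.eq_empty_or_nonempty (w.erase a) with he | hne'
      · exfalso
        have := (singleton_local g a).2
        rw [← eq_singleton_of_erase_empty ha he] at this
        exact hL this
      · exact hne'
    obtain ⟨γ, hγ⟩ := hane
    have hγw : γ ∈ w := Finset.mem_of_mem_erase hγ
    have hγ' : γ ∈ insert b (w.erase a) := Finset.mem_insert_of_mem hγ
    by_cases hL' : isLocal g (insert b (w.erase a))
    · have h1 : jb g (tOf g (insert b (w.erase a))) (insert b (w.erase a))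
          ≤ jmax g (tOf g (insert b (w.erase a))) := jb_le_jmax g hL'
      have h2 : jmax g (tOf g (insert b (w.erase a))) ≤ Jw g w :=
        jmax_le_Jw g hγw (hL' γ hγ')
      rw [jS_local g hL', jS_cross g hL] at hj
      have h3 := Nat.left_le_pair (Jw g w) (Encodable.encode w)
      omega
    · rw [jS_cross g hL', jS_cross g hL] at hj
      have h4 := (Nat.pair_eq_pair.1 (Nat.succ_injective hj)).2
      have h5 := Encodable.encode_injective h4
      exact hb (h5 ▸ Finset.mem_insert_self b (w.erase a))

end Blocks

noncomputable def natOf (o : Ordinal.{v}) : ℕ := Cardinal.toNat o.card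

lemma natOf_cast (n : ℕ) : natOf (n : Ordinal.{v}) = n := by
  rw [natOf, Ordinal.card_nat, Cardinal.toNat_natCast]

lemma cast_natOf {o : Ordinal.{v}} (h : o < Ordinal.omega0) : ((natOf o : ℕ) : Ordinal) = o := by
  obtain ⟨n, rfl⟩ := Ordinal.lt_omega0.1 h
  rw [natOf_cast]

lemma natOf_strictMonoOn : StrictMonoOn natOf (Set.Iio Ordinal.omega0.{v}) := by
  intro x hx y hy h
  obtain ⟨n, rfl⟩ := Ordinal.lt_omega0.1 hx
  obtain ⟨m, rfl⟩ := Ordinal.lt_omega0.1 hy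
  rw [natOf_cast, natOf_cast]
  exact_mod_cast h

/-- Pull a finset of ordinals below `ω` down to `ℕ`. -/
noncomputable def toN (w : Finset Ordinal.{v}) : Finset ℕ := w.image natOf

section Sys
variable (g : ℕ → CodeData ε) (hg : ∀ t, ValidC ε (g t))

/-- The YZR(ε)-system on `ω` built from the enumeration `g` of codes. -/
noncomputable def Sys : YZRSystem.{u} ε where
  X := Set.Iio Ordinal.omega0
  nonempty := ⟨0, Ordinal.omega0_pos⟩
  r w := rS g (toN w)
  j w := jS g (toN w)
  k w := kS g (toN w)
  r_le w hne _ := rS_le g hg (hne.image _)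
  mono u w hne hsub _ := rS_mono g hg (hne.image _) (Finset.image_subset_image hsub)
  r_pos a _ := by
    show 0 < rS g (toN {a})
    have h : toN {a} = {natOf a} := Finset.image_singleton _ _
    rw [h]
    exact rS_pos g hg (natOf a)
  k_lt w hne hsub := by
    have hw : ∀ x ∈ w, x ∈ Set.Iio Ordinal.omega0 := fun x hx => hsub (Finset.mem_coe.2 hx)
    have := kS_lt g hg (w := toN w) (hne.image _)
    rwa [toN, tf_card natOf_strictMonoOn hw] at this
  witness w hne hsub a ha hpa b hbX hbw := by
    rintro ⟨h1, h2, h3⟩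
    have hw : ∀ x ∈ w, x ∈ Set.Iio Ordinal.omega0 := fun x hx => hsub (Finset.mem_coe.2 hx)
    have haX : a ∈ Set.Iio Ordinal.omega0 := hw a ha
    have hbn : natOf b ∉ toN w := fun hc => hbw ((tf_mem natOf_strictMonoOn hw hbX).1 hc)
    have epa : ((toN w).filter (fun x => x < natOf a)).card = kS g (toN w) := by
      rw [toN, tf_filter_card natOf_strictMonoOn hw haX]; exact hpa
    have epb : ((toN w).filter (fun x => x < natOf b)).card = kS g (toN w) := by
      rw [toN, tf_filter_card natOf_strictMonoOn hw hbX]; exact h1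
    have ein : Finset.image natOf (insert b w) = insert (natOf b) (Finset.image natOf w) :=
      Finset.image_insert _ _ _
    have eer : Finset.image natOf (insert b (w.erase a))
        = insert (natOf b) ((Finset.image natOf w).erase (natOf a)) := by
      rw [Finset.image_insert, tf_erase natOf_strictMonoOn hw haX]
    refine witS g hg (hne.image _) (Finset.mem_image_of_mem natOf ha) epa hbn ⟨epb, ?_, ?_⟩
    · rw [← eer]; exact h2
    · rw [← ein]; exact h3

end Sys

section CodeOfq
variable {ε : Ordinal.{u}} (q : YZRSystem.{u} ε) (hq : q.X.Finite)

noncomputable def Fq : Finset Ordinal.{u} := hq.toFinset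

noncomputable def eIso : Fin (Fq q hq).card ≃o {x // x ∈ Fq q hq} :=
  (Fq q hq).orderIsoOfFin rfl

noncomputable def ψq : ℕ → Ordinal.{u} := fun m =>
  if h : m < (Fq q hq).card then (eIso q hq ⟨m, h⟩ : Ordinal) else 0

noncomputable def toIic (ε : Ordinal.{u}) (o : Ordinal.{u}) : ↥(Set.Iic ε) :=
  if h : o ≤ ε then ⟨o, h⟩ else ⟨0, Set.mem_Iic.2 zero_le⟩

noncomputable def codeOf : CodeData ε :=
  ⟨(Fq q hq).card - 1, fun v =>
    (toIic ε (q.r (v.image fun i => ψq q hq i.val)),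
     q.j (v.image fun i => ψq q hq i.val),
     q.k (v.image fun i => ψq q hq i.val))⟩

lemma Fq_nonempty : (Fq q hq).Nonempty := by
  obtain ⟨x, hx⟩ := q.nonempty
  exact ⟨x, hq.mem_toFinset.2 hx⟩

lemma sz_codeOf : sz (codeOf q hq) = (Fq q hq).card := by
  have := (Fq_nonempty q hq).card_pos
  show (Fq q hq).card - 1 + 1 = (Fq q hq).card
  omega

lemma ψq_mem {m : ℕ} (h : m < sz (codeOf q hq)) : ψq q hq m ∈ q.X := by
  rw [sz_codeOf] at h
  rw [ψq, dif_pos h]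
  exact hq.mem_toFinset.1 (eIso q hq ⟨m, h⟩).2

lemma ψq_strictMonoOn : StrictMonoOn (ψq q hq) {m | m < sz (codeOf q hq)} := by
  intro x hx y hy hlt
  simp only [Set.mem_setOf_eq, sz_codeOf] at hx hy
  show ψq q hq x < ψq q hq y
  simp only [ψq]
  rw [dif_pos hx, dif_pos hy]
  exact Subtype.coe_lt_coe.2 ((eIso q hq).strictMono (Fin.mk_lt_mk.2 hlt))

lemma attach_image {u : Finset ℕ} (h : ∀ m ∈ u, m < sz (codeOf q hq)) :
    (u.attachFin h).image (fun i : Fin (sz (codeOf q hq)) => ψq q hq i.val)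
      = u.image (ψq q hq) := by
  ext y
  simp only [Finset.mem_image]
  constructor
  · rintro ⟨i, hi, rfl⟩
    exact ⟨i.val, (Finset.mem_attachFin _).1 hi, rfl⟩
  · rintro ⟨m, hm, rfl⟩
    exact ⟨⟨m, h m hm⟩, (Finset.mem_attachFin _).2 hm, rfl⟩

lemma img_sub {u : Finset ℕ} (hu : ∀ m ∈ u, m < sz (codeOf q hq)) :
    ↑(u.image (ψq q hq)) ⊆ q.X := by
  intro y hy
  rw [Finset.mem_coe, Finset.mem_image] at hy
  obtain ⟨m, hm, rfl⟩ := hy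
  exact ψq_mem q hq (hu m hm)

lemma cR_codeOf {u : Finset ℕ} (hne : u.Nonempty) (hu : ∀ m ∈ u, m < sz (codeOf q hq)) :
    cR (codeOf q hq) u = q.r (u.image (ψq q hq)) := by
  rw [cR, dif_pos hu]
  show ((toIic ε (q.r ((u.attachFin hu).image fun i => ψq q hq i.val)) : ↥(Set.Iic ε)) : Ordinal) = _
  rw [attach_image]
  have hle := q.r_le _ (hne.image _) (img_sub q hq hu)
  rw [toIic, dif_pos hle]

lemma cJ_codeOf {u : Finset ℕ} (hu : ∀ m ∈ u, m < sz (codeOf q hq)) :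
    cJ (codeOf q hq) u = q.j (u.image (ψq q hq)) := by
  rw [cJ, dif_pos hu]
  show q.j ((u.attachFin hu).image fun i => ψq q hq i.val) = _
  rw [attach_image]

lemma cK_codeOf {u : Finset ℕ} (hu : ∀ m ∈ u, m < sz (codeOf q hq)) :
    cK (codeOf q hq) u = q.k (u.image (ψq q hq)) := by
  rw [cK, dif_pos hu]
  show q.k ((u.attachFin hu).image fun i => ψq q hq i.val) = _
  rw [attach_image]

lemma codeOf_valid : ValidC ε (codeOf q hq) := by
  constructor
  · intro u hne hu
    rw [cR_codeOf q hq hne hu]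
    exact q.r_le _ (hne.image _) (img_sub q hq hu)
  · intro u w hne hsub hw
    have hu : ∀ m ∈ u, m < sz (codeOf q hq) := fun m hm => hw m (hsub hm)
    rw [cR_codeOf q hq hne hu, cR_codeOf q hq (hne.mono hsub) hw]
    exact q.mono _ _ (hne.image _) (Finset.image_subset_image hsub) (img_sub q hq hw)
  · intro m hm
    have hu : ∀ x ∈ ({m} : Finset ℕ), x < sz (codeOf q hq) := by
      intro x hx; rw [Finset.mem_singleton] at hx; subst hx; exact hm
    rw [cR_codeOf q hq ⟨m, Finset.mem_singleton_self m⟩ hu, Finset.image_singleton]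
    exact q.r_pos _ (ψq_mem q hq hm)
  · intro u hne hu
    rw [cK_codeOf q hq hu]
    have := q.k_lt _ (hne.image _) (img_sub q hq hu)
    rwa [tf_card (ψq_strictMonoOn q hq) hu] at this
  · intro u hne hu a ha hpa b hb hbu
    rintro ⟨h1, h2, h3⟩
    have haD : a ∈ {m : ℕ | m < sz (codeOf q hq)} := hu a ha
    have ein : (insert b u).image (ψq q hq)
        = insert (ψq q hq b) (u.image (ψq q hq)) := Finset.image_insert _ _ _
    have eer : (insert b (u.erase a)).image (ψq q hq)
        = insert (ψq q hq b) ((u.image (ψq q hq)).erase (ψq q hq a)) := by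
      rw [Finset.image_insert, tf_erase (ψq_strictMonoOn q hq) hu haD]
    have hbin : ∀ m ∈ insert b u, m < sz (codeOf q hq) := by
      intro m hm; rcases Finset.mem_insert.1 hm with rfl | hm
      exacts [hb, hu m hm]
    have hber : ∀ m ∈ insert b (u.erase a), m < sz (codeOf q hq) := by
      intro m hm; rcases Finset.mem_insert.1 hm with rfl | hm
      exacts [hb, hu m (Finset.mem_of_mem_erase hm)]
    refine q.witness (u.image (ψq q hq)) (hne.image _) (img_sub q hq hu)
      (ψq q hq a) (Finset.mem_image_of_mem _ ha) ?_ (ψq q hq b) (ψq_mem q hq hb)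
      (fun hc => hbu ((tf_mem (ψq_strictMonoOn q hq) hu hb).1 hc)) ⟨?_, ?_, ?_⟩
    · rw [tf_filter_card (ψq_strictMonoOn q hq) hu haD, hpa, cK_codeOf q hq hu]
    · rw [tf_filter_card (ψq_strictMonoOn q hq) hu hb, h1, cK_codeOf q hq hu]
    · rw [← eer, ← cJ_codeOf q hq hber, ← cJ_codeOf q hq hu, h2]
    · rw [← ein, ← cR_codeOf q hq ⟨b, Finset.mem_insert_self _ _⟩ hbin,
        ← cR_codeOf q hq hne hu, h3]

end CodeOfq

section Emb
variable {ε : Ordinal.{u}} (g : ℕ → CodeData ε) (hg : ∀ t, ValidC ε (g t))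
variable (q : YZRSystem.{u} ε) (hq : q.X.Finite)

noncomputable def idxq (x : Ordinal.{u}) : ℕ :=
  if h : x ∈ Fq q hq then ((eIso q hq).symm ⟨x, h⟩).val else 0

omit hg in
lemma idxq_lt {x : Ordinal.{u}} (hx : x ∈ q.X) : idxq q hq x < (Fq q hq).card := by
  rw [idxq, dif_pos (show x ∈ Fq q hq from hq.mem_toFinset.2 hx)]
  exact ((eIso q hq).symm _).isLt

omit hg in
lemma ψq_idxq {x : Ordinal.{u}} (hx : x ∈ q.X) : ψq q hq (idxq q hq x) = x := by
  have h : x ∈ Fq q hq := hq.mem_toFinset.2 hx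
  rw [idxq, dif_pos h]
  simp only [ψq]
  rw [dif_pos (((eIso q hq).symm ⟨x, h⟩).isLt)]
  rw [Fin.eta ((eIso q hq).symm ⟨x, h⟩) (((eIso q hq).symm ⟨x, h⟩).isLt)]
  rw [OrderIso.apply_symm_apply]

omit hg in
lemma idxq_strictMonoOn : StrictMonoOn (idxq q hq) q.X := by
  intro x hx y hy hlt
  have h1 : x ∈ Fq q hq := hq.mem_toFinset.2 hx
  have h2 : y ∈ Fq q hq := hq.mem_toFinset.2 hy
  show idxq q hq x < idxq q hq y
  rw [idxq, dif_pos h1, idxq, dif_pos h2]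
  exact (eIso q hq).symm.strictMono (Subtype.mk_lt_mk.2 hlt)

variable (t : ℕ)

noncomputable def ιq (x : Ordinal.{u}) : ℕ := st g t + idxq q hq x

noncomputable def φq (x : Ordinal.{u}) : Ordinal.{w} := ((ιq g q hq t x : ℕ) : Ordinal)

omit hg in
lemma emb_val (hgt : g t = codeOf q hq) {v : Finset Ordinal.{u}} (hne : v.Nonempty)
    (hv : ↑v ⊆ q.X) :
    rS g (v.image (ιq g q hq t)) = q.r v ∧
    jS g (v.image (ιq g q hq t)) = q.j v ∧
    kS g (v.image (ιq g q hq t)) = q.k v := by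
  have hvD : ∀ x ∈ v, x ∈ q.X := fun x hx => hv (Finset.mem_coe.2 hx)
  have hszt : sz (g t) = (Fq q hq).card := by rw [hgt, sz_codeOf]
  have hBt : ∀ m ∈ v.image (ιq g q hq t), m ∈ Bt g t := by
    intro m hm
    rw [Finset.mem_image] at hm
    obtain ⟨x, hx, rfl⟩ := hm
    have := idxq_lt q hq (hvD x hx)
    rw [mem_Bt, st_succ, hszt]
    constructor
    · exact Nat.le_add_right _ _
    · exact Nat.add_lt_add_left this _
  obtain ⟨ht1, hL⟩ := local_of_subset g (hne.image _) hBt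
  have e1 : shz g t (v.image (ιq g q hq t)) = v.image (idxq q hq) := by
    rw [shz, Finset.image_image]
    exact Finset.image_congr (fun x _ => by show st g t + idxq q hq x - st g t = idxq q hq x; omega)
  have hbd : ∀ m ∈ v.image (idxq q hq), m < sz (codeOf q hq) := by
    intro m hm
    rw [Finset.mem_image] at hm
    obtain ⟨x, hx, rfl⟩ := hm
    rw [sz_codeOf]
    exact idxq_lt q hq (hvD x hx)
  have e2 : (v.image (idxq q hq)).image (ψq q hq) = v := by
    rw [Finset.image_image]
    calc v.image (ψq q hq ∘ idxq q hq) = v.image id :=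
          Finset.image_congr (fun x hx => ψq_idxq q hq (hvD x hx))
      _ = v := Finset.image_id
  refine ⟨?_, ?_, ?_⟩
  · rw [rS_local g hL, ht1, rb, e1, hgt, cR_codeOf q hq (hne.image _) hbd, e2]
  · rw [jS_local g hL, ht1, jb, e1, hgt, cJ_codeOf q hq hbd, e2]
  · rw [kS_local g hL, ht1, kb, e1, hgt, cK_codeOf q hq hbd, e2]

lemma quasiEmb_φq (hgt : g t = codeOf q hq) : QuasiEmb q (Sys g hg) (φq g q hq t) := by
  refine ⟨?_, ?_, ?_⟩
  · intro x hx y hy hlt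
    have : ιq g q hq t x < ιq g q hq t y :=
      Nat.add_lt_add_left (idxq_strictMonoOn q hq hx hy hlt) _
    show ((ιq g q hq t x : ℕ) : Ordinal) < ((ιq g q hq t y : ℕ) : Ordinal)
    exact_mod_cast this
  · intro x _
    show ((ιq g q hq t x : ℕ) : Ordinal) ∈ Set.Iio Ordinal.omega0
    exact Ordinal.nat_lt_omega0 _
  · intro v hne hv
    obtain ⟨hr, hj, hk⟩ := emb_val g q hq t hgt hne hv
    have e0 : toN (v.image (φq g q hq t)) = v.image (ιq g q hq t) := by
      rw [toN, Finset.image_image]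
      exact Finset.image_congr (fun x _ => natOf_cast _)
    exact ⟨(congrArg (rS g) e0).trans hr, (congrArg (kS g) e0).trans hk,
      fun _ => (congrArg (jS g) e0).trans hj⟩

end Emb

lemma trivial_valid {ε : Ordinal.{u}} (h0 : 0 < ε) :
    ValidC ε (⟨0, fun _ => (⟨ε, Set.mem_Iic.2 (le_refl ε)⟩, 0, 0)⟩ : CodeData ε) := by
  constructor
  · intro u hne hu
    unfold cR; rw [dif_pos hu]
  · intro u w hne hsub hw
    unfold cR; rw [dif_pos hw, dif_pos (fun m hm => hw m (hsub hm))]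
  · intro m hm
    have hu : ∀ x ∈ ({m} : Finset ℕ), x < sz (⟨0, fun _ => (⟨ε, Set.mem_Iic.2 (le_refl ε)⟩, 0, 0)⟩ : CodeData ε) := by
      intro x hx; rw [Finset.mem_singleton] at hx; subst hx; exact hm
    unfold cR; rw [dif_pos hu]
    exact h0
  · intro u hne hu
    unfold cK; rw [dif_pos hu]
    exact hne.card_pos
  · intro u hne hu a ha hpa b hb hbu
    rintro ⟨-, -, -⟩
    obtain ⟨x, hx⟩ := hne
    have h1 := hu x hx
    have h2 : sz (⟨0, fun _ => (⟨ε, Set.mem_Iic.2 (le_refl ε)⟩, 0, 0)⟩ : CodeData ε) = 1 := rfl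
    rw [h2] at h1 hb
    have : b = x := by omega
    exact hbu (this ▸ hx)

/-- Theorem 3.4: for every `0 < ε < ω₁` there is a cute `YZR(ε)`-system, i.e. one with
universe `ω` into which every finite `YZR(ε)`-system quasi-embeds with range in `[M, ω)`,
for every `M < ω`. -/
theorem stmt_17 (ε : Ordinal) (h0 : 0 < ε) (h1 : ε < (Cardinal.aleph 1).ord) :
    ∃ S : YZRSystem ε, S.X = Set.Iio Ordinal.omega0 ∧
      ∀ q : YZRSystem ε, q.X.Finite → ∀ M : ℕ,
        ∃ φ : Ordinal → Ordinal, QuasiEmb q S φ ∧ ∀ a ∈ q.X, (M : Ordinal) ≤ φ a := by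
  have hcount : Countable (CodeData ε) := countable_CodeData h1
  have hnv : Nonempty {c : CodeData ε // ValidC ε c} :=
    ⟨⟨⟨0, fun _ => (⟨ε, le_refl ε⟩, 0, 0)⟩, trivial_valid h0⟩⟩
  obtain ⟨f, hf⟩ := exists_surjective_nat {c : CodeData ε // ValidC ε c}
  have hg : ∀ t, ValidC ε ((fun s => (f (Nat.unpair s).1).val) t) :=
    fun t => (f (Nat.unpair t).1).2
  refine ⟨Sys (fun s => (f (Nat.unpair s).1).val) hg, rfl, ?_⟩
  intro q hq M
  obtain ⟨i, hi⟩ := hf ⟨codeOf q hq, codeOf_valid q hq⟩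
  have hgt : (fun s => (f (Nat.unpair s).1).val) (Nat.pair i M) = codeOf q hq := by
    show (f (Nat.unpair (Nat.pair i M)).1).val = _
    rw [Nat.unpair_pair]
    exact congrArg Subtype.val hi
  refine ⟨φq (fun s => (f (Nat.unpair s).1).val) q hq (Nat.pair i M),
    quasiEmb_φq (fun s => (f (Nat.unpair s).1).val) hg q hq (Nat.pair i M) hgt, ?_⟩
  intro a _
  show (M : Ordinal) ≤ ((ιq (fun s => (f (Nat.unpair s).1).val) q hq (Nat.pair i M) a : ℕ) : Ordinal)
  have h5 : M ≤ ιq (fun s => (f (Nat.unpair s).1).val) q hq (Nat.pair i M) a :=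
    le_trans (le_trans (Nat.right_le_pair i M) (le_st _ (Nat.pair i M))) (Nat.le_add_right _ _)
  exact_mod_cast h5
end

section
/- Let p ∈ 𝒫_ι (the approximation poset of the main construction) with data (w, n, M, η̄, t̄, d̄, h̄, ḡ, ℳ, ρ̄), where ι ≥ 3. Suppose ν⁰ᵢ, ν¹ᵢ ∈ ⋃_{m<M}(t_m ∩ 2ⁿ) for i < ι satisfy: (a) there are no repetitions in the list ⟨ν⁰ᵢ, ν¹ᵢ : i<ι⟩, and (b) ν⁰ᵢ + ν¹ᵢ = ν⁰ⱼ + ν¹ⱼ for all i < j < ι. Then there exist a, b ∈ w such that {{ν⁰ᵢ, ν¹ᵢ} : i<ι} = {{gᵢ(a,b), gᵢ(b,a)} : i<ι}. -/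
section aux

variable {V : Type*} [AddCommGroup V] [Module (ZMod 2) V]

lemma addSelf (x : V) : x + x = 0 := by
  calc x + x = (2 : ZMod 2) • x := (two_smul (ZMod 2) x).symm
    _ = (0 : ZMod 2) • x := by rw [show (2 : ZMod 2) = 0 from rfl]
    _ = 0 := zero_smul _ _

lemma eq_of_add_eq_zero2 (x y : V) (h : x + y = 0) : x = y := by
  calc x = x + (y + y) := by rw [addSelf, add_zero]
    _ = (x + y) + y := by rw [add_assoc]
    _ = 0 + y := by rw [h]
    _ = y := zero_add y

lemma pair_zero {ι : Type*} {u : ι → V} (hu : LinearIndependent (ZMod 2) u)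
    {a b : ι} (h : u a + u b = 0) : a = b := by
  exact hu.injective (eq_of_add_eq_zero2 _ _ h)

lemma four_zero {ι : Type*} {u : ι → V} (hu : LinearIndependent (ZMod 2) u)
    {a b c d : ι} (h : u a + u b + u c + u d = 0) :
    (a = b ∧ c = d) ∨ (a = c ∧ b = d) ∨ (a = d ∧ b = c) := by
  classical
  by_cases hab : a = b
  · subst hab
    refine Or.inl ⟨rfl, pair_zero hu ?_⟩
    have h' : (u a + u a) + (u c + u d) = 0 := by rw [← h]; abel
    simpa [addSelf] using h'
  by_cases hac : a = c
  · subst hac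
    refine Or.inr (Or.inl ⟨rfl, pair_zero hu ?_⟩)
    have h' : (u a + u a) + (u b + u d) = 0 := by rw [← h]; abel
    simpa [addSelf] using h'
  by_cases had : a = d
  · subst had
    refine Or.inr (Or.inr ⟨rfl, pair_zero hu ?_⟩)
    have h' : (u a + u a) + (u b + u c) = 0 := by rw [← h]; abel
    simpa [addSelf] using h'
  exfalso
  by_cases hbc : b = c
  · subst hbc
    apply had
    apply pair_zero hu
    have h' : (u b + u b) + (u a + u d) = 0 := by rw [← h]; abel
    simpa [addSelf] using h'
  by_cases hbd : b = d
  · subst hbd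
    apply hac
    apply pair_zero hu
    have h' : (u b + u b) + (u a + u c) = 0 := by rw [← h]; abel
    simpa [addSelf] using h'
  by_cases hcd : c = d
  · subst hcd
    apply hab
    apply pair_zero hu
    have h' : (u c + u c) + (u a + u b) = 0 := by rw [← h]; abel
    simpa [addSelf] using h'
  have h' := linearIndependent_iff'.mp hu {a, b, c, d} (fun _ => 1) ?_ a (by simp)
  · exact one_ne_zero h'
  · rw [Finset.sum_insert (by simp [hab, hac, had]),
      Finset.sum_insert (by simp [hbc, hbd]),
      Finset.sum_insert (by simp [hcd]), Finset.sum_singleton]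
    simp only [one_smul]
    rw [show u a + (u b + (u c + u d)) = u a + u b + u c + u d by abel]
    exact h

lemma split_aux {ι₁ ι₂ : Type*} {u1 : ι₁ → V} {u2 : ι₂ → V}
    (hli : LinearIndependent (ZMod 2) (Sum.elim u1 u2))
    {x1 x2 x3 x4 : ι₁} {r1 r2 r3 r4 : ι₂}
    (e : (u1 x1 + u2 r1) + (u1 x2 + u2 r2) = (u1 x3 + u2 r3) + (u1 x4 + u2 r4)) :
    ((x1 = x2 ∧ x3 = x4) ∨ (x1 = x3 ∧ x2 = x4) ∨ (x1 = x4 ∧ x2 = x3)) ∧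
    ((r1 = r2 ∧ r3 = r4) ∨ (r1 = r3 ∧ r2 = r4) ∨ (r1 = r4 ∧ r2 = r3)) := by
  obtain ⟨hi1, hi2, hd⟩ := linearIndependent_sum.mp hli
  simp only [Sum.elim_comp_inl, Sum.elim_comp_inr] at hi1 hi2 hd
  have hAB : (u1 x1 + u1 x2 + u1 x3 + u1 x4) + (u2 r1 + u2 r2 + u2 r3 + u2 r4) = 0 := by
    have h8 : ((u1 x1 + u2 r1) + (u1 x2 + u2 r2)) + ((u1 x3 + u2 r3) + (u1 x4 + u2 r4)) = 0 := by
      rw [e]; exact addSelf _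
    rw [← h8]; abel
  have hA_mem : (u1 x1 + u1 x2 + u1 x3 + u1 x4) ∈ Submodule.span (ZMod 2) (Set.range u1) := by
    refine Submodule.add_mem _ (Submodule.add_mem _ (Submodule.add_mem _ ?_ ?_) ?_) ?_ <;>
      exact Submodule.subset_span ⟨_, rfl⟩
  have hB_mem : (u2 r1 + u2 r2 + u2 r3 + u2 r4) ∈ Submodule.span (ZMod 2) (Set.range u2) := by
    refine Submodule.add_mem _ (Submodule.add_mem _ (Submodule.add_mem _ ?_ ?_) ?_) ?_ <;>
      exact Submodule.subset_span ⟨_, rfl⟩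
  have hA_eq : (u1 x1 + u1 x2 + u1 x3 + u1 x4) = (u2 r1 + u2 r2 + u2 r3 + u2 r4) := by
    exact eq_of_add_eq_zero2 _ _ hAB
  have hA0 : (u1 x1 + u1 x2 + u1 x3 + u1 x4) = 0 :=
    Submodule.disjoint_def.mp hd _ hA_mem (hA_eq ▸ hB_mem)
  have hB0 : (u2 r1 + u2 r2 + u2 r3 + u2 r4) = 0 := by
    rw [hA0, zero_add] at hAB; exact hAB
  exact ⟨four_zero hi1 hA0, four_zero hi2 hB0⟩

lemma pigeon_aux {W : Type*} [DecidableEq W] {k : ℕ} (hk : 3 ≤ k)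
    (ν0 ν1 : Fin k → W)
    (hnodup : ∀ i j, (ν0 i = ν0 j → i = j) ∧ (ν1 i = ν1 j → i = j) ∧ ν0 i ≠ ν1 j)
    (e1 e2 e3 e4 : W)
    (hm : ∀ j, (ν0 j = e1 ∨ ν0 j = e2 ∨ ν0 j = e3 ∨ ν0 j = e4) ∧
               (ν1 j = e1 ∨ ν1 j = e2 ∨ ν1 j = e3 ∨ ν1 j = e4)) : False := by
  have key : (Finset.univ : Finset (Fin k × Bool)).card ≤ ({e1, e2, e3, e4} : Finset W).card := by
    apply Finset.card_le_card_of_injOn (fun q => cond q.2 (ν1 q.1) (ν0 q.1))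
    · rintro ⟨j, ε⟩ -
      cases ε
      · show ν0 j ∈ _
        simp only [Finset.mem_coe, Finset.mem_insert, Finset.mem_singleton]
        exact (hm j).1
      · show ν1 j ∈ _
        simp only [Finset.mem_coe, Finset.mem_insert, Finset.mem_singleton]
        exact (hm j).2
    · rintro ⟨j, ε⟩ - ⟨j', ε'⟩ - h
      cases ε <;> cases ε' <;> simp only [Bool.cond_false, Bool.cond_true] at h
      · obtain rfl := (hnodup j j').1 h; rfl
      · exact absurd h (hnodup j j').2.2
      · exact absurd h.symm (hnodup j' j).2.2
      · obtain rfl := (hnodup j j').2.1 h; rfl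
  have h1 : (Finset.univ : Finset (Fin k × Bool)).card = k * 2 := by simp
  have h2 : ({e1, e2, e3, e4} : Finset W).card ≤ 4 :=
    calc ({e1, e2, e3, e4} : Finset W).card
        ≤ ({e2, e3, e4} : Finset W).card + 1 := Finset.card_insert_le _ _
      _ ≤ (({e3, e4} : Finset W).card + 1) + 1 :=
          Nat.add_le_add_right (Finset.card_insert_le _ _) 1
      _ ≤ ((({e4} : Finset W).card + 1) + 1) + 1 :=
          Nat.add_le_add_right (Nat.add_le_add_right (Finset.card_insert_le _ _) 1) 1
      _ = 4 := by simp
  omega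

end aux

/-- Claim 5.7(A): in a condition of the approximation poset `𝒫_ι` with `ι ≥ 3`, any sequence
`⟨ν⁰ᵢ, ν¹ᵢ : i < ι⟩` of pairwise distinct nodes from `⋃_{m<M}(t_m ∩ 2ⁿ)` with all sums
`ν⁰ᵢ + ν¹ᵢ` equal comes, as a set of unordered pairs, from a single pair `a, b ∈ w`:
`{{ν⁰ᵢ, ν¹ᵢ} : i<ι} = {{gᵢ(a,b), gᵢ(b,a)} : i<ι}`. -/
theorem stmt_18 (n M iota : ℕ) (hn : 0 < n) (hiota : 3 ≤ iota)
    (w : Finset ℕ)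
    (η : ℕ → (Fin n → ZMod 2))
    (ρ : ℕ → ℕ → ℕ → (Fin n → ZMod 2))
    (hli : LinearIndependent (ZMod 2)
      (Sum.elim (fun a : {a : ℕ // a ∈ w} => η a.1)
        (fun p : {p : ℕ × ℕ × ℕ // p.1 < iota ∧ p.2.1 ∈ w ∧ p.2.2 ∈ w ∧ p.2.1 < p.2.2} =>
          ρ p.1.1 p.1.2.1 p.1.2.2)))
    (g : ℕ → ℕ → ℕ → (Fin n → ZMod 2))
    (hg : ∀ i a b, a ∈ w → b ∈ w → a < b →
      g i a b = η a + ρ i a b ∧ g i b a = η b + ρ i a b)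
    (t : Fin M → Set (Fin n → ZMod 2))
    (ht_sub : ∀ m, t m ⊆ {x | ∃ i < iota, ∃ a ∈ w, ∃ b ∈ w, a ≠ b ∧ x = g i a b})
    (ht_disj : ∀ m m' : Fin M, m ≠ m' → t m ∩ t m' = ∅)
    (ν0 ν1 : Fin iota → (Fin n → ZMod 2))
    (hmem : ∀ i, (∃ m, ν0 i ∈ t m) ∧ (∃ m, ν1 i ∈ t m))
    (hnodup : ∀ i j, (ν0 i = ν0 j → i = j) ∧ (ν1 i = ν1 j → i = j) ∧ ν0 i ≠ ν1 j)
    (hsum : ∀ i j, ν0 i + ν1 i = ν0 j + ν1 j) :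
    ∃ a ∈ w, ∃ b ∈ w, a ≠ b ∧
      (Set.range fun i : Fin iota => ({ν0 i, ν1 i} : Set (Fin n → ZMod 2))) =
      (Set.range fun i : Fin iota => ({g i.1 a b, g i.1 b a} : Set (Fin n → ZMod 2))) := by
  classical
  -- Step 1: representation of each node
  have rep : ∀ ξ : Fin n → ZMod 2, (∃ m, ξ ∈ t m) →
      ∃ (x : {a : ℕ // a ∈ w})
        (r : {p : ℕ × ℕ × ℕ // p.1 < iota ∧ p.2.1 ∈ w ∧ p.2.2 ∈ w ∧ p.2.1 < p.2.2}),
        (x.1 = r.1.2.1 ∨ x.1 = r.1.2.2) ∧ ξ = η x.1 + ρ r.1.1 r.1.2.1 r.1.2.2 := by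
    rintro ξ ⟨m, hm⟩
    obtain ⟨k, hk, a', ha', b', hb', hab', rfl⟩ := ht_sub m hm
    rcases lt_or_gt_of_ne hab' with h | h
    · exact ⟨⟨a', ha'⟩, ⟨(k, a', b'), hk, ha', hb', h⟩, Or.inl rfl, (hg k a' b' ha' hb' h).1⟩
    · exact ⟨⟨a', ha'⟩, ⟨(k, b', a'), hk, hb', ha', h⟩, Or.inr rfl, (hg k b' a' hb' ha' h).2⟩
  choose X0 S0 hp0 he0 using fun i => rep (ν0 i) (hmem i).1
  choose X1 S1 hp1 he1 using fun i => rep (ν1 i) (hmem i).2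
  -- Step 2: the key relations coming from linear independence
  have P : ∀ i j : Fin iota,
      ((X0 i = X1 i ∧ X0 j = X1 j) ∨ (X0 i = X0 j ∧ X1 i = X1 j) ∨
        (X0 i = X1 j ∧ X1 i = X0 j)) ∧
      ((S0 i = S1 i ∧ S0 j = S1 j) ∨ (S0 i = S0 j ∧ S1 i = S1 j) ∨
        (S0 i = S1 j ∧ S1 i = S0 j)) := by
    intro i j
    refine split_aux hli (x1 := X0 i) (x2 := X1 i) (x3 := X0 j) (x4 := X1 j)
      (r1 := S0 i) (r2 := S1 i) (r3 := S0 j) (r4 := S1 j) ?_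
    have h := hsum i j
    rw [he0 i, he1 i, he0 j, he1 j] at h
    exact h
  -- Step 3: the pigeonhole argument
  have pigeon : ∀ r r' : {p : ℕ × ℕ × ℕ // p.1 < iota ∧ p.2.1 ∈ w ∧ p.2.2 ∈ w ∧ p.2.1 < p.2.2},
      (∀ j, (S0 j = r ∨ S0 j = r') ∧ (S1 j = r ∨ S1 j = r')) → False := by
    intro r r' hall
    refine pigeon_aux hiota ν0 ν1 hnodup
      (η r.1.2.1 + ρ r.1.1 r.1.2.1 r.1.2.2) (η r.1.2.2 + ρ r.1.1 r.1.2.1 r.1.2.2)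
      (η r'.1.2.1 + ρ r'.1.1 r'.1.2.1 r'.1.2.2) (η r'.1.2.2 + ρ r'.1.1 r'.1.2.1 r'.1.2.2) ?_
    intro j
    constructor
    · rcases (hall j).1 with h | h <;> rcases hp0 j with h' | h'
      · exact Or.inl (by rw [he0 j, h', h])
      · exact Or.inr (Or.inl (by rw [he0 j, h', h]))
      · exact Or.inr (Or.inr (Or.inl (by rw [he0 j, h', h])))
      · exact Or.inr (Or.inr (Or.inr (by rw [he0 j, h', h])))
    · rcases (hall j).2 with h | h <;> rcases hp1 j with h' | h'
      · exact Or.inl (by rw [he1 j, h', h])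
      · exact Or.inr (Or.inl (by rw [he1 j, h', h]))
      · exact Or.inr (Or.inr (Or.inl (by rw [he1 j, h', h])))
      · exact Or.inr (Or.inr (Or.inr (by rw [he1 j, h', h])))
  -- Step 4: η-indices of ν0 i and ν1 i always differ
  by_cases hexA : ∃ i, X0 i = X1 i
  · exfalso
    obtain ⟨i0, hA⟩ := hexA
    have hSne : S0 i0 ≠ S1 i0 := by
      intro h
      exact (hnodup i0 i0).2.2 (by rw [he0 i0, he1 i0, hA, h])
    apply pigeon (S0 i0) (S1 i0)
    intro j
    rcases (P i0 j).2 with ⟨h1, _⟩ | ⟨h1, h2⟩ | ⟨h1, h2⟩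
    · exact absurd h1 hSne
    · exact ⟨Or.inl h1.symm, Or.inr h2.symm⟩
    · exact ⟨Or.inr h2.symm, Or.inl h1.symm⟩
  push_neg at hexA
  -- Step 5: the ρ-indices of ν0 i and ν1 i always agree
  by_cases hexS : ∃ i, S0 i ≠ S1 i
  · exfalso
    obtain ⟨i0, hS⟩ := hexS
    apply pigeon (S0 i0) (S1 i0)
    intro j
    rcases (P i0 j).2 with ⟨h1, _⟩ | ⟨h1, h2⟩ | ⟨h1, h2⟩
    · exact absurd h1 hS
    · exact ⟨Or.inl h1.symm, Or.inr h2.symm⟩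
    · exact ⟨Or.inr h2.symm, Or.inl h1.symm⟩
  push_neg at hexS
  -- Step 6: the η-pairs all coincide
  have hXpair : ∀ i j : Fin iota,
      (X0 i = X0 j ∧ X1 i = X1 j) ∨ (X0 i = X1 j ∧ X1 i = X0 j) := by
    intro i j
    rcases (P i j).1 with ⟨h1, _⟩ | h | h
    · exact absurd h1 (hexA i)
    · exact Or.inl h
    · exact Or.inr h
  have i0 : Fin iota := ⟨0, by omega⟩
  refine ⟨(X0 i0).1, (X0 i0).2, (X1 i0).1, (X1 i0).2, fun h => hexA i0 (Subtype.ext h), ?_⟩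
  -- Step 7: the map i ↦ S0 i is injective
  have hSinj : ∀ i j : Fin iota, S0 i = S0 j → i = j := by
    intro i j h
    rcases hXpair i j with ⟨h1, _⟩ | ⟨h1, _⟩
    · exact (hnodup i j).1 (by rw [he0 i, he0 j, h1, h])
    · exact absurd (show ν0 i = ν1 j by rw [he0 i, he1 j, h1, h, ← hexS j]) (hnodup i j).2.2
  -- Step 8: the pair of each S0 j is {a, b}
  have hpairS : ∀ j, ((S0 j).1.2.1 = (X0 i0).1 ∧ (S0 j).1.2.2 = (X1 i0).1) ∨
      ((S0 j).1.2.1 = (X1 i0).1 ∧ (S0 j).1.2.2 = (X0 i0).1) := by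
    intro j
    have h0 := hp0 j
    have h1 := hp1 j
    rw [← hexS j] at h1
    have hne : (X0 j).1 ≠ (X1 j).1 := fun h => hexA j (Subtype.ext h)
    have hcd : (S0 j).1.2.1 < (S0 j).1.2.2 := (S0 j).2.2.2.2
    have hx : ((X0 j).1 = (X0 i0).1 ∧ (X1 j).1 = (X1 i0).1) ∨
        ((X0 j).1 = (X1 i0).1 ∧ (X1 j).1 = (X0 i0).1) := by
      rcases hXpair i0 j with ⟨e1, e2⟩ | ⟨e1, e2⟩
      · exact Or.inl ⟨congrArg Subtype.val e1.symm, congrArg Subtype.val e2.symm⟩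
      · exact Or.inr ⟨congrArg Subtype.val e2.symm, congrArg Subtype.val e1.symm⟩
    omega
  -- Step 9: the index map is a bijection of Fin iota
  have hKbij : Function.Bijective (fun j : Fin iota => (⟨(S0 j).1.1, (S0 j).2.1⟩ : Fin iota)) := by
    rw [← Finite.injective_iff_bijective]
    intro i j h
    have hk : (S0 i).1.1 = (S0 j).1.1 := by
      simpa using congrArg Fin.val h
    apply hSinj
    apply Subtype.ext
    have pi := hpairS i
    have pj := hpairS j
    have hcdi : (S0 i).1.2.1 < (S0 i).1.2.2 := (S0 i).2.2.2.2
    have hcdj : (S0 j).1.2.1 < (S0 j).1.2.2 := (S0 j).2.2.2.2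
    have hpe : (S0 i).1.2.1 = (S0 j).1.2.1 ∧ (S0 i).1.2.2 = (S0 j).1.2.2 := by omega
    have : (S0 i).1.2 = (S0 j).1.2 := Prod.ext hpe.1 hpe.2
    exact Prod.ext hk this
  -- Step 10: each unordered pair is a g-pair
  have hpairset : ∀ j, ({ν0 j, ν1 j} : Set (Fin n → ZMod 2)) =
      {g (S0 j).1.1 (X0 i0).1 (X1 i0).1, g (S0 j).1.1 (X1 i0).1 (X0 i0).1} := by
    intro j
    obtain ⟨hk, hcw, hdw, hcd⟩ := (S0 j).2
    obtain ⟨g1, g2⟩ := hg (S0 j).1.1 (S0 j).1.2.1 (S0 j).1.2.2 hcw hdw hcd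
    have e0 := he0 j
    have e1 := he1 j
    rw [← hexS j] at e1
    have hx : ((X0 j).1 = (X0 i0).1 ∧ (X1 j).1 = (X1 i0).1) ∨
        ((X0 j).1 = (X1 i0).1 ∧ (X1 j).1 = (X0 i0).1) := by
      rcases hXpair i0 j with ⟨e1', e2'⟩ | ⟨e1', e2'⟩
      · exact Or.inl ⟨congrArg Subtype.val e1'.symm, congrArg Subtype.val e2'.symm⟩
      · exact Or.inr ⟨congrArg Subtype.val e2'.symm, congrArg Subtype.val e1'.symm⟩
    rcases hpairS j with ⟨hc, hd⟩ | ⟨hc, hd⟩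
    · rw [← hc, ← hd, g1, g2, e0, e1]
      rcases hx with ⟨h1, h2⟩ | ⟨h1, h2⟩
      · rw [h1, h2, ← hc, ← hd]
      · rw [h1, h2, ← hc, ← hd]
        exact Set.pair_comm _ _
    · rw [← hd, ← hc, g1, g2, e0, e1]
      rcases hx with ⟨h1, h2⟩ | ⟨h1, h2⟩
      · rw [h1, h2, ← hd, ← hc]
      · rw [h1, h2, ← hd, ← hc]
        exact Set.pair_comm _ _
  -- Step 11: conclude
  calc (Set.range fun i : Fin iota => ({ν0 i, ν1 i} : Set (Fin n → ZMod 2)))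
      = Set.range ((fun i : Fin iota =>
          ({g i.1 (X0 i0).1 (X1 i0).1, g i.1 (X1 i0).1 (X0 i0).1} : Set (Fin n → ZMod 2))) ∘
          (fun j : Fin iota => (⟨(S0 j).1.1, (S0 j).2.1⟩ : Fin iota))) := by
        apply congrArg Set.range
        funext j
        exact hpairset j
    _ = _ := hKbij.2.range_comp _
end

section
/- Let n ≥ 1 and let the vectors ⟨η_a : a ∈ w⟩ ⌢ ⟨ρ_{i,a,b} : i < 2, a < b in w⟩ be linearly independent in (𝔽₂)ⁿ, and set gᵢ(a,b) = η_a + ρ_{i,a,b}, gᵢ(b,a) = η_b + ρ_{i,a,b} for a < b in w and i < 2 (with ρ_{i,b,a} := ρ_{i,a,b}). Suppose U ⊆ (𝔽₂)ⁿ with |U| ≥ 5 is such that for every pair of distinct η, ν ∈ U there exist ν⁰, ν¹, μ⁰, μ¹ in the set G = {gᵢ(a,b), gᵢ(b,a) : i<2, a<b in w}, pairwise distinct, with ν⁰ + ν¹ = μ⁰ + μ¹ = η + ν. Then for all distinct η, ν ∈ U there are a, b ∈ w with η + ν = η_a + η_b. -/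
theorem myext (V : Type) [AddCommGroup V] [Module (ZMod 2) V] {ι : Type} [DecidableEq ι] (v : ι → V)
    (hli : LinearIndependent (ZMod 2) v) :
    ∃ φ : ι → (V →ₗ[ZMod 2] ZMod 2), ∀ i j, φ i (v j) = if i = j then 1 else 0 := by
  classical
  let B := Module.Basis.span hli
  have h1 : ∀ i : ι, ∃ f : V →ₗ[ZMod 2] ZMod 2,
      f.comp (Submodule.span (ZMod 2) (Set.range v)).subtype = B.coord i :=
    fun i => LinearMap.exists_extend (B.coord i)
  choose φ hφ using h1
  refine ⟨φ, fun i j => ?_⟩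
  have h2 : v j = ((Submodule.span (ZMod 2) (Set.range v)).subtype) (B j) :=
    (congrArg Subtype.val (Module.Basis.span_apply hli j)).symm
  rw [h2, ← LinearMap.comp_apply, hφ, Module.Basis.coord_apply, Module.Basis.repr_self,
    Finsupp.single_apply]
  simp [eq_comm]

lemma zd (P Q R S : Prop) [Decidable P] [Decidable Q] [Decidable R] [Decidable S] :
    ((if P then (1:ZMod 2) else 0) + (if Q then 1 else 0) =
     (if R then (1:ZMod 2) else 0) + (if S then 1 else 0)) ↔ ((P ↔ Q) ↔ (R ↔ S)) := by
  by_cases hP : P <;> by_cases hQ : Q <;> by_cases hR : R <;> by_cases hS : S <;>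
    simp [hP, hQ, hR, hS] <;> decide

lemma core_lemma (n : ℕ) (w : Finset ℕ) (η : ℕ → Fin n → ZMod 2)
    (ρ : ℕ → ℕ → ℕ → Fin n → ZMod 2)
    (Φη : ℕ → ((Fin n → ZMod 2) →ₗ[ZMod 2] ZMod 2))
    (Hηη : ∀ c, c ∈ w → ∀ d, d ∈ w → Φη c (η d) = if c = d then 1 else 0)
    (Hηρ : ∀ c, c ∈ w → ∀ i a b, i < 2 → a ∈ w → b ∈ w → a < b → Φη c (ρ i a b) = 0)
    (hself : ∀ z : Fin n → ZMod 2, z + z = 0)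
    (c0 i0 a0 b0 c1 i1 a1 b1 d0 d1 : ℕ)
    (h0i : i0 < 2) (h0a : a0 ∈ w) (h0b : b0 ∈ w) (h0ab : a0 < b0) (hc0 : c0 = a0 ∨ c0 = b0)
    (h1i : i1 < 2) (h1a : a1 ∈ w) (h1b : b1 ∈ w) (h1ab : a1 < b1) (hc1 : c1 = a1 ∨ c1 = b1)
    (hd0 : d0 = a0 ∨ d0 = b0) (hd1 : d1 = a1 ∨ d1 = b1)
    (hne0 : c0 ≠ d0) (hne1 : c1 ≠ d1) (hPQ : ((i0,a0,b0) : ℕ×ℕ×ℕ) ≠ (i1,a1,b1))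
    (heq : (η c0 + ρ i0 a0 b0) + (η c1 + ρ i1 a1 b1)
         = (η d0 + ρ i0 a0 b0) + (η d1 + ρ i1 a1 b1)) :
    ∃ a ∈ w, ∃ b ∈ w, a < b ∧
      ((η c0 + ρ i0 a0 b0) + (η c1 + ρ i1 a1 b1) = η a + η b + (ρ 0 a b + ρ 1 a b) ∨
       (η c0 + ρ i0 a0 b0) + (η c1 + ρ i1 a1 b1) = ρ 0 a b + ρ 1 a b) := by
  have hc0w : c0 ∈ w := by rcases hc0 with rfl | rfl <;> assumption
  have hc1w : c1 ∈ w := by rcases hc1 with rfl | rfl <;> assumption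
  have hd0w : d0 ∈ w := by rcases hd0 with rfl | rfl <;> assumption
  have hd1w : d1 ∈ w := by rcases hd1 with rfl | rfl <;> assumption
  have key' : ∀ e, e ∈ w → ((e = c0 ↔ e = c1) ↔ (e = d0 ↔ e = d1)) := by
    intro e he
    have h := congrArg (Φη e) heq
    simp only [map_add, Hηη e he c0 hc0w, Hηη e he c1 hc1w, Hηη e he d0 hd0w,
      Hηη e he d1 hd1w, Hηρ e he i0 a0 b0 h0i h0a h0b h0ab,
      Hηρ e he i1 a1 b1 h1i h1a h1b h1ab, add_zero] at h
    exact (zd _ _ _ _).mp h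
  by_cases hcc : c0 = c1
  · have h1 : d0 ≠ c0 := Ne.symm hne0
    have h2 : d0 ≠ c1 := hcc ▸ h1
    have h3 : d0 = d0 := rfl
    have hdd : d0 = d1 := ((key' d0 hd0w).mp (iff_of_false h1 h2)).mp rfl
    obtain ⟨ha', hb'⟩ : a0 = a1 ∧ b0 = b1 := by omega
    subst ha'; subst hb'
    have hii : i0 ≠ i1 := by
      intro h; exact hPQ (by rw [h])
    refine ⟨a0, h0a, b0, h0b, h0ab, Or.inr ?_⟩
    subst hcc
    have e1 : (η c0 + ρ i0 a0 b0) + (η c0 + ρ i1 a0 b0)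
        = ρ i0 a0 b0 + ρ i1 a0 b0 + (η c0 + η c0) := by abel
    rw [hself, add_zero] at e1
    rw [e1]
    rcases (show (i0 = 0 ∧ i1 = 1) ∨ (i0 = 1 ∧ i1 = 0) by omega) with ⟨r1, r2⟩ | ⟨r1, r2⟩ <;>
      subst r1 <;> subst r2
    · rfl
    · abel
  · have h3 : c0 = c0 := rfl
    have h01 : c0 = d1 := by
      by_contra hcon
      exact hcc (((key' c0 hc0w).mpr (iff_of_false hne0 hcon)).mp rfl)
    have h4 : c1 = c1 := rfl
    have h10 : c1 = d0 := by
      by_contra hcon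
      exact (Ne.symm hcc) (((key' c1 hc1w).mpr (iff_of_false hcon hne1)).mpr rfl)
    obtain ⟨ha', hb'⟩ : a0 = a1 ∧ b0 = b1 := by omega
    subst ha'; subst hb'
    have hii : i0 ≠ i1 := by intro h; exact hPQ (by rw [h])
    refine ⟨a0, h0a, b0, h0b, h0ab, Or.inl ?_⟩
    rcases (show (c0 = a0 ∧ c1 = b0) ∨ (c0 = b0 ∧ c1 = a0) by omega) with ⟨r1, r2⟩ | ⟨r1, r2⟩ <;>
      rcases (show (i0 = 0 ∧ i1 = 1) ∨ (i0 = 1 ∧ i1 = 0) by omega) with ⟨s1, s2⟩ | ⟨s1, s2⟩ <;>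
      subst r1 <;> subst r2 <;> subst s1 <;> subst s2 <;> abel

lemma classify_lemma (n : ℕ) (w : Finset ℕ) (η : ℕ → Fin n → ZMod 2)
    (ρ : ℕ → ℕ → ℕ → Fin n → ZMod 2)
    (Φη : ℕ → ((Fin n → ZMod 2) →ₗ[ZMod 2] ZMod 2))
    (Φρ : ℕ × ℕ × ℕ → ((Fin n → ZMod 2) →ₗ[ZMod 2] ZMod 2))
    (Hηη : ∀ c, c ∈ w → ∀ d, d ∈ w → Φη c (η d) = if c = d then 1 else 0)
    (Hηρ : ∀ c, c ∈ w → ∀ i a b, i < 2 → a ∈ w → b ∈ w → a < b → Φη c (ρ i a b) = 0)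
    (Hρη : ∀ i a b, i < 2 → a ∈ w → b ∈ w → a < b → ∀ d, d ∈ w → Φρ (i,a,b) (η d) = 0)
    (Hρρ : ∀ i a b, i < 2 → a ∈ w → b ∈ w → a < b → ∀ i' a' b', i' < 2 → a' ∈ w → b' ∈ w →
      a' < b' → Φρ (i,a,b) (ρ i' a' b') = if ((i,a,b) : ℕ×ℕ×ℕ) = (i',a',b') then 1 else 0)
    (hself : ∀ z : Fin n → ZMod 2, z + z = 0)
    (c0 i0 a0 b0 c1 i1 a1 b1 d0 j0 e0 f0 d1 j1 e1 f1 : ℕ)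
    (h0i : i0 < 2) (h0a : a0 ∈ w) (h0b : b0 ∈ w) (h0ab : a0 < b0) (hc0 : c0 = a0 ∨ c0 = b0)
    (h1i : i1 < 2) (h1a : a1 ∈ w) (h1b : b1 ∈ w) (h1ab : a1 < b1) (hc1 : c1 = a1 ∨ c1 = b1)
    (h2i : j0 < 2) (h2a : e0 ∈ w) (h2b : f0 ∈ w) (h2ab : e0 < f0) (hd0 : d0 = e0 ∨ d0 = f0)
    (h3i : j1 < 2) (h3a : e1 ∈ w) (h3b : f1 ∈ w) (h3ab : e1 < f1) (hd1 : d1 = e1 ∨ d1 = f1)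
    (hne01 : η c0 + ρ i0 a0 b0 ≠ η c1 + ρ i1 a1 b1)
    (hne02 : η c0 + ρ i0 a0 b0 ≠ η d0 + ρ j0 e0 f0)
    (hne03 : η c0 + ρ i0 a0 b0 ≠ η d1 + ρ j1 e1 f1)
    (hne12 : η c1 + ρ i1 a1 b1 ≠ η d0 + ρ j0 e0 f0)
    (hne13 : η c1 + ρ i1 a1 b1 ≠ η d1 + ρ j1 e1 f1)
    (hne23 : η d0 + ρ j0 e0 f0 ≠ η d1 + ρ j1 e1 f1)
    (heq2 : (η c0 + ρ i0 a0 b0) + (η c1 + ρ i1 a1 b1)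
          = (η d0 + ρ j0 e0 f0) + (η d1 + ρ j1 e1 f1)) :
    ∃ a ∈ w, ∃ b ∈ w, a < b ∧
      ((η c0 + ρ i0 a0 b0) + (η c1 + ρ i1 a1 b1) = η a + η b ∨
       (η c0 + ρ i0 a0 b0) + (η c1 + ρ i1 a1 b1) = η a + η b + (ρ 0 a b + ρ 1 a b) ∨
       (η c0 + ρ i0 a0 b0) + (η c1 + ρ i1 a1 b1) = ρ 0 a b + ρ 1 a b) := by
  have hc0w : c0 ∈ w := by rcases hc0 with rfl | rfl <;> assumption
  have hc1w : c1 ∈ w := by rcases hc1 with rfl | rfl <;> assumption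
  have hd0w : d0 ∈ w := by rcases hd0 with rfl | rfl <;> assumption
  have hd1w : d1 ∈ w := by rcases hd1 with rfl | rfl <;> assumption
  by_cases hP : ((i0, a0, b0) : ℕ × ℕ × ℕ) = (i1, a1, b1)
  · obtain ⟨g1, g2, g3⟩ : i0 = i1 ∧ a0 = a1 ∧ b0 = b1 := by simpa [Prod.ext_iff] using hP
    subst g1; subst g2; subst g3
    have hcc : c0 ≠ c1 := fun h => hne01 (by rw [h])
    refine ⟨a0, h0a, b0, h0b, h0ab, Or.inl ?_⟩
    have e1 : (η c0 + ρ i0 a0 b0) + (η c1 + ρ i0 a0 b0)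
        = η c0 + η c1 + (ρ i0 a0 b0 + ρ i0 a0 b0) := by abel
    rw [hself, add_zero] at e1
    rw [e1]
    rcases (show (c0 = a0 ∧ c1 = b0) ∨ (c0 = b0 ∧ c1 = a0) by omega) with ⟨r1, r2⟩ | ⟨r1, r2⟩ <;>
      subst r1 <;> subst r2
    · rfl
    · abel
  · by_cases hQ : ((j0, e0, f0) : ℕ × ℕ × ℕ) = (j1, e1, f1)
    · obtain ⟨g1, g2, g3⟩ : j0 = j1 ∧ e0 = e1 ∧ f0 = f1 := by simpa [Prod.ext_iff] using hQ
      subst g1; subst g2; subst g3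
      have hdd : d0 ≠ d1 := fun h => hne23 (by rw [h])
      refine ⟨e0, h2a, f0, h2b, h2ab, Or.inl ?_⟩
      have e1 : (η d0 + ρ j0 e0 f0) + (η d1 + ρ j0 e0 f0)
          = η d0 + η d1 + (ρ j0 e0 f0 + ρ j0 e0 f0) := by abel
      rw [hself, add_zero] at e1
      rw [heq2, e1]
      rcases (show (d0 = e0 ∧ d1 = f0) ∨ (d0 = f0 ∧ d1 = e0) by omega) with ⟨r1, r2⟩ | ⟨r1, r2⟩ <;>
        subst r1 <;> subst r2
      · rfl
      · abel
    · have keyρ : ∀ i a b : ℕ, i < 2 → a ∈ w → b ∈ w → a < b →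
          (((((i,a,b) : ℕ×ℕ×ℕ) = (i0,a0,b0)) ↔ (((i,a,b) : ℕ×ℕ×ℕ) = (i1,a1,b1))) ↔
           ((((i,a,b) : ℕ×ℕ×ℕ) = (j0,e0,f0)) ↔ (((i,a,b) : ℕ×ℕ×ℕ) = (j1,e1,f1)))) := by
        intro i a b hi ha hb hab
        have h := congrArg (Φρ (i,a,b)) heq2
        simp only [map_add, Hρη i a b hi ha hb hab c0 hc0w, Hρη i a b hi ha hb hab c1 hc1w,
          Hρη i a b hi ha hb hab d0 hd0w, Hρη i a b hi ha hb hab d1 hd1w,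
          Hρρ i a b hi ha hb hab i0 a0 b0 h0i h0a h0b h0ab,
          Hρρ i a b hi ha hb hab i1 a1 b1 h1i h1a h1b h1ab,
          Hρρ i a b hi ha hb hab j0 e0 f0 h2i h2a h2b h2ab,
          Hρρ i a b hi ha hb hab j1 e1 f1 h3i h3a h3b h3ab,
          zero_add] at h
        exact (zd _ _ _ _).mp h
      have hP0 : ((i0,a0,b0) : ℕ×ℕ×ℕ) = (j0,e0,f0) ∨ ((i0,a0,b0) : ℕ×ℕ×ℕ) = (j1,e1,f1) := by
        have h := keyρ i0 a0 b0 h0i h0a h0b h0ab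
        by_contra hcon
        push_neg at hcon
        exact hP ((h.mpr (iff_of_false hcon.1 hcon.2)).mp rfl)
      rcases hP0 with hP0 | hP0
      · have hP1 : ((i1,a1,b1) : ℕ×ℕ×ℕ) = (j1,e1,f1) := by
          have h := keyρ i1 a1 b1 h1i h1a h1b h1ab
          have hne : ((i1,a1,b1) : ℕ×ℕ×ℕ) ≠ (j0,e0,f0) := fun hh => hP (hP0.trans hh.symm)
          by_contra hcon
          exact (fun hh => hP hh.symm) ((h.mpr (iff_of_false hne hcon)).mpr rfl)
        obtain ⟨g1, g2, g3⟩ : i0 = j0 ∧ a0 = e0 ∧ b0 = f0 := by simpa [Prod.ext_iff] using hP0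
        subst g1; subst g2; subst g3
        obtain ⟨g1, g2, g3⟩ : i1 = j1 ∧ a1 = e1 ∧ b1 = f1 := by simpa [Prod.ext_iff] using hP1
        subst g1; subst g2; subst g3
        have hcd0 : c0 ≠ d0 := fun h => hne02 (by rw [h])
        have hcd1 : c1 ≠ d1 := fun h => hne13 (by rw [h])
        obtain ⟨A, hA, B, hB, hAB, hforms⟩ := core_lemma n w η ρ Φη Hηη Hηρ hself
          c0 i0 a0 b0 c1 i1 a1 b1 d0 d1 h0i h0a h0b h0ab hc0 h1i h1a h1b h1ab hc1
          hd0 hd1 hcd0 hcd1 hP heq2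
        exact ⟨A, hA, B, hB, hAB, Or.inr hforms⟩
      · have hP1 : ((i1,a1,b1) : ℕ×ℕ×ℕ) = (j0,e0,f0) := by
          have h := keyρ i1 a1 b1 h1i h1a h1b h1ab
          have hne : ((i1,a1,b1) : ℕ×ℕ×ℕ) ≠ (j1,e1,f1) := fun hh => hP (hP0.trans hh.symm)
          by_contra hcon
          exact (fun hh => hP hh.symm) ((h.mpr (iff_of_false hcon hne)).mpr rfl)
        obtain ⟨g1, g2, g3⟩ : i0 = j1 ∧ a0 = e1 ∧ b0 = f1 := by simpa [Prod.ext_iff] using hP0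
        subst g1; subst g2; subst g3
        obtain ⟨g1, g2, g3⟩ : i1 = j0 ∧ a1 = e0 ∧ b1 = f0 := by simpa [Prod.ext_iff] using hP1
        subst g1; subst g2; subst g3
        have heq2' : (η c0 + ρ i0 a0 b0) + (η c1 + ρ i1 a1 b1)
            = (η d1 + ρ i0 a0 b0) + (η d0 + ρ i1 a1 b1) := by rw [heq2]; abel
        have hcd0 : c0 ≠ d1 := fun h => hne03 (by rw [h])
        have hcd1 : c1 ≠ d0 := fun h => hne12 (by rw [h])
        obtain ⟨A, hA, B, hB, hAB, hforms⟩ := core_lemma n w η ρ Φη Hηη Hηρ hself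
          c0 i0 a0 b0 c1 i1 a1 b1 d1 d0 h0i h0a h0b h0ab hc0 h1i h1a h1b h1ab hc1
          hd1 hd0 hcd0 hcd1 hP heq2'
        exact ⟨A, hA, B, hB, hAB, Or.inr hforms⟩

/-- The combinatorial core of Claim 5.7 for `ι = 2`: if the vectors
`⟨η_a : a ∈ w⟩ ⌢ ⟨ρ_{i,a,b} : i < 2, a < b in w⟩` are linearly independent in `(𝔽₂)ⁿ`,
`gᵢ(a,b) = η_a + ρ_{i,a,b}`, `gᵢ(b,a) = η_b + ρ_{i,a,b}`, and every sum `η + ν` of distinct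
elements of a set `U` with `|U| ≥ 5` can be written in two disjoint ways as a sum of two
elements of `G = {gᵢ(a,b), gᵢ(b,a) : i < 2, a < b in w}`, then every such sum `η + ν`
equals `η_a + η_b` for some `a, b ∈ w`. -/
theorem stmt_19 (n : ℕ) (hn : 1 ≤ n)
    (w : Finset ℕ)
    (η : ℕ → (Fin n → ZMod 2))
    (ρ : ℕ → ℕ → ℕ → (Fin n → ZMod 2))
    (hli : LinearIndependent (ZMod 2)
      (Sum.elim (fun a : {a : ℕ // a ∈ w} => η a.1)
        (fun p : {p : ℕ × ℕ × ℕ // p.1 < 2 ∧ p.2.1 ∈ w ∧ p.2.2 ∈ w ∧ p.2.1 < p.2.2} =>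
          ρ p.1.1 p.1.2.1 p.1.2.2)))
    (g : ℕ → ℕ → ℕ → (Fin n → ZMod 2))
    (hg : ∀ i a b, a ∈ w → b ∈ w → a < b →
      g i a b = η a + ρ i a b ∧ g i b a = η b + ρ i a b)
    (G : Set (Fin n → ZMod 2))
    (hG : G = {x | ∃ i < 2, ∃ a ∈ w, ∃ b ∈ w, a < b ∧ (x = g i a b ∨ x = g i b a)})
    (U : Finset (Fin n → ZMod 2)) (hU : 5 ≤ U.card)
    (hpairs : ∀ x ∈ U, ∀ y ∈ U, x ≠ y →
      ∃ ν0 ν1 μ0 μ1 : Fin n → ZMod 2, ν0 ∈ G ∧ ν1 ∈ G ∧ μ0 ∈ G ∧ μ1 ∈ G ∧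
        ν0 ≠ ν1 ∧ ν0 ≠ μ0 ∧ ν0 ≠ μ1 ∧ ν1 ≠ μ0 ∧ ν1 ≠ μ1 ∧ μ0 ≠ μ1 ∧
        ν0 + ν1 = x + y ∧ μ0 + μ1 = x + y) :
    ∀ x ∈ U, ∀ y ∈ U, x ≠ y → ∃ a ∈ w, ∃ b ∈ w, x + y = η a + η b := by
  classical
  obtain ⟨φ, hφ⟩ := myext _ _ hli
  have hzmodself : ∀ r : ZMod 2, r + r = 0 := by decide
  have hzmodne : ∀ r s : ZMod 2, r ≠ s → r + s = 1 := by decide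
  have hself : ∀ z : Fin n → ZMod 2, z + z = 0 := fun z => funext fun i => hzmodself (z i)
  have cancel : ∀ u t : Fin n → ZMod 2, u + t = 0 → u = t := by
    intro u t h
    calc u = u + (t + t) := by rw [hself t, add_zero]
    _ = (u + t) + t := by abel
    _ = t := by rw [h, zero_add]
  obtain ⟨Φη, Φρ, Hηη, Hηρ, Hρη, Hρρ⟩ :
      ∃ (Φη : ℕ → ((Fin n → ZMod 2) →ₗ[ZMod 2] ZMod 2))
        (Φρ : ℕ × ℕ × ℕ → ((Fin n → ZMod 2) →ₗ[ZMod 2] ZMod 2)),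
        (∀ c, c ∈ w → ∀ d, d ∈ w → Φη c (η d) = if c = d then 1 else 0) ∧
        (∀ c, c ∈ w → ∀ i a b, i < 2 → a ∈ w → b ∈ w → a < b → Φη c (ρ i a b) = 0) ∧
        (∀ i a b, i < 2 → a ∈ w → b ∈ w → a < b → ∀ d, d ∈ w → Φρ (i,a,b) (η d) = 0) ∧
        (∀ i a b, i < 2 → a ∈ w → b ∈ w → a < b → ∀ i' a' b', i' < 2 → a' ∈ w → b' ∈ w →
          a' < b' → Φρ (i,a,b) (ρ i' a' b') = if ((i,a,b) : ℕ×ℕ×ℕ) = (i',a',b') then 1 else 0) := by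
    refine ⟨fun c => if h : c ∈ w then φ (Sum.inl ⟨c, h⟩) else 0,
      fun p => if h : p.1 < 2 ∧ p.2.1 ∈ w ∧ p.2.2 ∈ w ∧ p.2.1 < p.2.2
        then φ (Sum.inr ⟨p, h⟩) else 0, ?_, ?_, ?_, ?_⟩
    · intro c hc d hd
      dsimp only
      rw [dif_pos hc]
      have h := hφ (Sum.inl ⟨c, hc⟩) (Sum.inl ⟨d, hd⟩)
      simp only [Sum.elim_inl] at h
      rw [h]
      simp [Sum.inl.injEq, Subtype.mk.injEq]
    · intro c hc i a b hi ha hb hab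
      dsimp only
      rw [dif_pos hc]
      have h := hφ (Sum.inl ⟨c, hc⟩) (Sum.inr ⟨(i,a,b), ⟨hi, ha, hb, hab⟩⟩)
      simpa using h
    · intro i a b hi ha hb hab d hd
      have hcond : ((i,a,b) : ℕ×ℕ×ℕ).1 < 2 ∧ ((i,a,b) : ℕ×ℕ×ℕ).2.1 ∈ w ∧
          ((i,a,b) : ℕ×ℕ×ℕ).2.2 ∈ w ∧ ((i,a,b) : ℕ×ℕ×ℕ).2.1 < ((i,a,b) : ℕ×ℕ×ℕ).2.2 :=
        ⟨hi, ha, hb, hab⟩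
      dsimp only
      rw [dif_pos hcond]
      have h := hφ (Sum.inr ⟨(i,a,b), hcond⟩) (Sum.inl ⟨d, hd⟩)
      simpa using h
    · intro i a b hi ha hb hab i' a' b' hi' ha' hb' hab'
      have hcond : ((i,a,b) : ℕ×ℕ×ℕ).1 < 2 ∧ ((i,a,b) : ℕ×ℕ×ℕ).2.1 ∈ w ∧
          ((i,a,b) : ℕ×ℕ×ℕ).2.2 ∈ w ∧ ((i,a,b) : ℕ×ℕ×ℕ).2.1 < ((i,a,b) : ℕ×ℕ×ℕ).2.2 :=
        ⟨hi, ha, hb, hab⟩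
      dsimp only
      rw [dif_pos hcond]
      have h := hφ (Sum.inr ⟨(i,a,b), hcond⟩) (Sum.inr ⟨(i',a',b'), ⟨hi', ha', hb', hab'⟩⟩)
      simp only [Sum.elim_inr] at h
      rw [h]
      simp [Sum.inr.injEq, Subtype.mk.injEq]
  have hGdec : ∀ z ∈ G, ∃ c i a b, (i < 2 ∧ a ∈ w ∧ b ∈ w ∧ a < b) ∧ (c = a ∨ c = b) ∧
      z = η c + ρ i a b := by
    intro z hz
    rw [hG] at hz
    obtain ⟨i, hi, a, ha, b, hb, hab, hz⟩ := hz
    obtain ⟨hgab, hgba⟩ := hg i a b ha hb hab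
    rcases hz with rfl | rfl
    · exact ⟨a, i, a, b, ⟨hi, ha, hb, hab⟩, Or.inl rfl, hgab⟩
    · exact ⟨b, i, a, b, ⟨hi, ha, hb, hab⟩, Or.inr rfl, hgba⟩
  have hcls : ∀ u ∈ U, ∀ t ∈ U, u ≠ t → ∃ a ∈ w, ∃ b ∈ w, a < b ∧
      (u + t = η a + η b ∨ u + t = η a + η b + (ρ 0 a b + ρ 1 a b) ∨
       u + t = ρ 0 a b + ρ 1 a b) := by
    intro u hu t ht hut
    obtain ⟨ν0, ν1, μ0, μ1, hν0, hν1, hμ0, hμ1, h01, h02, h03, h12, h13, h23, hs1, hs2⟩ :=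
      hpairs u hu t ht hut
    obtain ⟨c0, i0, a0, b0, hv0, hc0, hx0⟩ := hGdec ν0 hν0
    obtain ⟨c1, i1, a1, b1, hv1, hc1, hx1⟩ := hGdec ν1 hν1
    obtain ⟨d0, j0, e0, f0, hv2, hd0, hx2⟩ := hGdec μ0 hμ0
    obtain ⟨d1, j1, e1, f1, hv3, hd1, hx3⟩ := hGdec μ1 hμ1
    subst hx0; subst hx1; subst hx2; subst hx3
    have heq2 := hs1.trans hs2.symm
    obtain ⟨A, hA, B, hB, hAB, hforms⟩ := classify_lemma n w η ρ Φη Φρ Hηη Hηρ Hρη Hρρ hself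
      c0 i0 a0 b0 c1 i1 a1 b1 d0 j0 e0 f0 d1 j1 e1 f1
      hv0.1 hv0.2.1 hv0.2.2.1 hv0.2.2.2 hc0
      hv1.1 hv1.2.1 hv1.2.2.1 hv1.2.2.2 hc1
      hv2.1 hv2.2.1 hv2.2.2.1 hv2.2.2.2 hd0
      hv3.1 hv3.2.1 hv3.2.2.1 hv3.2.2.2 hd1
      h01 h02 h03 h12 h13 h23 heq2
    rw [← hs1]
    exact ⟨A, hA, B, hB, hAB, hforms⟩
  intro x hx y hy hxy
  obtain ⟨a, ha, b, hb, hab, hform⟩ := hcls x hx y hy hxy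
  have excl : ¬ (x + y = η a + η b + (ρ 0 a b + ρ 1 a b) ∨ x + y = ρ 0 a b + ρ 1 a b) := by
    intro hBC
    have h02 : (0:ℕ) < 2 := by omega
    have habne : a ≠ b := Nat.ne_of_lt hab
    have hχη : ∀ c, c ∈ w → ∀ d, d ∈ w → Φρ (0,a,b) (η c + η d) = 0 := by
      intro c hc d hd
      rw [map_add, Hρη 0 a b h02 ha hb hab c hc, Hρη 0 a b h02 ha hb hab d hd, add_zero]
    have hχσ : ∀ c, c ∈ w → ∀ d, d ∈ w → c < d →
        Φρ (0,a,b) (ρ 0 c d + ρ 1 c d) = if a = c ∧ b = d then 1 else 0 := by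
      intro c hc d hd hcd
      rw [map_add, Hρρ 0 a b h02 ha hb hab 0 c d (by omega) hc hd hcd,
        Hρρ 0 a b h02 ha hb hab 1 c d (by omega) hc hd hcd]
      simp [Prod.ext_iff]
    have hχf : Φρ (0,a,b) (x + y) = 1 := by
      rcases hBC with h | h
      · rw [h, map_add, hχη a ha b hb, hχσ a ha b hb hab]
        simp
      · rw [h, hχσ a ha b hb hab]
        simp
    have K : ∀ u ∈ U, ∀ t ∈ U, u ≠ t → Φρ (0,a,b) (u + t) = 1 →
        (u + t = η a + η b + (ρ 0 a b + ρ 1 a b) ∨ u + t = ρ 0 a b + ρ 1 a b) := by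
      intro u hu t ht hut h1
      obtain ⟨c, hc, d, hd, hcd, hf⟩ := hcls u hu t ht hut
      rcases hf with hf | hf | hf
      · rw [hf, hχη c hc d hd] at h1
        exact absurd h1 (by decide)
      · rw [hf, map_add, hχη c hc d hd, hχσ c hc d hd hcd, zero_add] at h1
        have hacbd : a = c ∧ b = d := by
          by_contra hcon
          rw [if_neg hcon] at h1
          exact absurd h1 (by decide)
        obtain ⟨g1, g2⟩ := hacbd
        subst g1; subst g2
        exact Or.inl hf
      · rw [hf, hχσ c hc d hd hcd] at h1
        have hacbd : a = c ∧ b = d := by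
          by_contra hcon
          rw [if_neg hcon] at h1
          exact absurd h1 (by decide)
        obtain ⟨g1, g2⟩ := hacbd
        subst g1; subst g2
        exact Or.inr hf
    have hne1 : Φρ (0,a,b) x ≠ Φρ (0,a,b) y := by
      intro h
      rw [map_add, h, hzmodself] at hχf
      exact absurd hχf (by decide)
    have hinj : Set.InjOn (fun u => (Φρ (0,a,b) u, Φη a u)) ↑U := by
      intro u hu t ht hft
      by_contra hut
      obtain ⟨hp1, hp2⟩ : Φρ (0,a,b) u = Φρ (0,a,b) t ∧ Φη a u = Φη a t := by
        simpa [Prod.ext_iff] using hft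
      obtain ⟨t0, ht0, ht0ne⟩ : ∃ t0 ∈ U, Φρ (0,a,b) t0 ≠ Φρ (0,a,b) u := by
        by_cases hxu : Φρ (0,a,b) x = Φρ (0,a,b) u
        · exact ⟨y, hy, fun h => hne1 (by rw [hxu, h])⟩
        · exact ⟨x, hx, hxu⟩
      have hut0 : u ≠ t0 := fun h => ht0ne (by rw [h])
      have htt0 : t ≠ t0 := fun h => ht0ne (by rw [← h]; exact hp1.symm)
      have hsum1 : Φρ (0,a,b) (u + t0) = 1 := by
        rw [map_add]
        exact hzmodne _ _ (fun h => ht0ne h.symm)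
      have hsum2 : Φρ (0,a,b) (t + t0) = 1 := by
        rw [map_add]
        exact hzmodne _ _ (fun h => ht0ne (by rw [← h, ← hp1]))
      have F1 := K u hu t0 ht0 hut0 hsum1
      have F2 := K t ht t0 ht0 htt0 hsum2
      have hsum : u + t = (u + t0) + (t + t0) := by
        have e : (u + t0) + (t + t0) = (u + t) + (t0 + t0) := by abel
        rw [hself, add_zero] at e
        exact e.symm
      have hψut : Φη a (u + t) = 0 := by rw [map_add, hp2, hzmodself]
      have hmix : ¬ (u + t = η a + η b) := by
        intro hval
        rw [hval, map_add, Hηη a ha a ha, Hηη a ha b hb, if_pos rfl, if_neg habne,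
          add_zero] at hψut
        exact absurd hψut (by decide)
      rcases F1 with F1 | F1 <;> rcases F2 with F2 | F2
      · have h0 : u + t = 0 := by rw [hsum, F1, F2, hself]
        exact hut (cancel _ _ h0)
      · apply hmix
        rw [hsum, F1, F2]
        have e : (η a + η b + (ρ 0 a b + ρ 1 a b)) + (ρ 0 a b + ρ 1 a b)
            = η a + η b + ((ρ 0 a b + ρ 1 a b) + (ρ 0 a b + ρ 1 a b)) := by abel
        rw [e, hself, add_zero]
      · apply hmix
        rw [hsum, F1, F2]
        have e : (ρ 0 a b + ρ 1 a b) + (η a + η b + (ρ 0 a b + ρ 1 a b))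
            = η a + η b + ((ρ 0 a b + ρ 1 a b) + (ρ 0 a b + ρ 1 a b)) := by abel
        rw [e, hself, add_zero]
      · have h0 : u + t = 0 := by rw [hsum, F1, F2, hself]
        exact hut (cancel _ _ h0)
    have hcard : U.card ≤ 4 := by
      have h := Finset.card_le_card_of_injOn (fun u => (Φρ (0,a,b) u, Φη a u))
        (fun u _ => Finset.mem_univ _) hinj
      simpa using h
    omega
  rcases hform with hform | hform | hform
  · exact ⟨a, ha, b, hb, hform⟩
  · exact absurd (Or.inl hform) excl
  · exact absurd (Or.inr hform) excl
end
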